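/- arXiv:math/0505097 — 3 statements merged into one kernel-verified Lean document; each statement's English description precedes it below -/
import Mathlib

section
/- For every s ∈ S_0 there is T_s > t_s (one may take T_s = 20 + 2 t_s*) such that for every t ≥ T_s the map κ ↦ g_s^κ(t) is defined and holomorphic on the disk B_{2πt}(0) = {κ : |κ| < 2πt} and has exactly one zero κ_0 in this disk, which is a simple zero; moreover κ_0 = t + 2πi s_1 + R_s(t) with |R_s(t)| ≤ 2e^{−t}(2πt + 2π|s_2| + 12) < 5. -/
open Filter Topology Set MeasureTheory
open scoped ENNReal Real

noncomputable section

/-- The exponential family `E_κ(z) = exp (z + κ)`. -/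
def Ek (κ : ℂ) (z : ℂ) : ℂ := Complex.exp (z + κ)

/-- The model function `F(t) = e^t - 1` for exponential growth. -/
def F (t : ℝ) : ℝ := Real.exp t - 1

/-- The inverse of `F` on the nonnegative reals. -/
def Finv (t : ℝ) : ℝ := Real.log (t + 1)

/-- The shift map `σ` on integer sequences; the sequence `s : ℕ → ℤ` represents
`(s_1, s_2, …)` with `s_{k+1} = s k`. -/
def shiftSeq (s : ℕ → ℤ) : ℕ → ℤ := fun n => s (n + 1)

/-- Exponentially bounded sequences (membership in `S_0`). -/
def expBounded (s : ℕ → ℤ) : Prop := ∃ x > 0, ∀ k : ℕ, |(s k : ℝ)| ≤ F^[k] x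

/-- `t_s^* = sup_{n ≥ 1} F^{∘(-n+1)}(|s_n|)`, as an extended nonnegative real. -/
def tstar (s : ℕ → ℤ) : ℝ≥0∞ := ⨆ n : ℕ, ENNReal.ofReal (Finv^[n] |(s n : ℝ)|)

/-- `t_s^*` as a real number (for exponentially bounded `s`). -/
def tstarR (s : ℕ → ℤ) : ℝ := (tstar s).toReal

/-- The minimal potential `t_s`. -/
def tmin (s : ℕ → ℤ) : ℝ≥0∞ :=
  sInf { y : ℝ≥0∞ | ∃ x : ℝ, 0 < x ∧ y = ENNReal.ofReal x ∧
    Filter.limsup (fun n => ENNReal.ofReal (|(s n : ℝ)| / F^[n] x)) Filter.atTop = 0 }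

/-- The slit plane `ℂ' = ℂ ∖ (-∞, 0]`. -/
def Cprime : Set ℂ := {z : ℂ | 0 < z.re ∨ z.im ≠ 0}

/-- The inverse branch `L_{κ,j}(z) = Log z - κ + 2πij`. -/
def Lk (κ : ℂ) (j : ℤ) (z : ℂ) : ℂ :=
  Complex.log z - κ + 2 * (Real.pi : ℂ) * Complex.I * (j : ℂ)

/-- The pullback approximants `g^n_{κ,s}(t) = L_{κ,s_1} ∘ ⋯ ∘ L_{κ,s_n}(F^∘n(t))`. -/
def gApprox (κ : ℂ) : ℕ → (ℕ → ℤ) → ℝ → ℂ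
  | 0, _, t => (t : ℂ)
  | n + 1, s, t => Lk κ (s 0) (gApprox κ n (shiftSeq s) (F t))

/-- All intermediate values of the `n`-th pullback approximant lie in the slit plane. -/
def approxDefined (κ : ℂ) : ℕ → (ℕ → ℤ) → ℝ → Prop
  | 0, _, _ => True
  | n + 1, s, t => gApprox κ n (shiftSeq s) (F t) ∈ Cprime ∧ approxDefined κ n (shiftSeq s) (F t)

/-- The pullback approximants at `(s, t)` are eventually defined and converge to `z`. -/
def RayTendsto (κ : ℂ) (s : ℕ → ℤ) (t : ℝ) (z : ℂ) : Prop :=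
  (∀ᶠ n in Filter.atTop, approxDefined κ n s t) ∧
  Filter.Tendsto (fun n => gApprox κ n s t) Filter.atTop (nhds z)

/-- The dynamic ray of `E_κ` at address `s` is defined at potential `t`. -/
def RayDefinedAt (κ : ℂ) (s : ℕ → ℤ) (t : ℝ) : Prop := ∃ z, RayTendsto κ s t z

-- The dynamic ray `g_s^κ(t)` (junk value `0` where undefined).
open Classical in
def ray (κ : ℂ) (s : ℕ → ℤ) (t : ℝ) : ℂ :=
  if h : ∃ z, RayTendsto κ s t z then h.choose else 0

/-- The set `𝒢_s(t)` of parameters `κ` for which the dynamic ray of `E_κ` at address `s`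
is defined at potential `t` with `g_s^κ(t) = 0`. -/
def Gset (s : ℕ → ℤ) (t : ℝ) : Set ℂ :=
  {κ : ℂ | ∃ N : ℕ, RayTendsto κ (shiftSeq^[N] s) (F^[N] t) ((Ek κ)^[N] 0)}

/-- The set `I` of escaping parameters. -/
def escapingParams : Set ℂ :=
  {κ : ℂ | Filter.Tendsto (fun n => ‖(Ek κ)^[n] 0‖) Filter.atTop Filter.atTop}

/-- The interval `(t_s, ∞)` of potentials. -/
def rayDomain (s : ℕ → ℤ) : Set ℝ := {t : ℝ | tmin s < ENNReal.ofReal t}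

/-- `κ₀` is a simple root of the holomorphic map `κ ↦ g_s^κ(t)`. -/
def SimpleRoot (s : ℕ → ℤ) (t : ℝ) (κ₀ : ℂ) : Prop :=
  ray κ₀ s t = 0 ∧ RayDefinedAt κ₀ s t ∧
  ∃ U ∈ nhds κ₀, (∀ κ ∈ U, RayDefinedAt κ s t) ∧
    DifferentiableOn ℂ (fun κ => ray κ s t) U ∧
    deriv (fun κ => ray κ s t) κ₀ ≠ 0

end

/-- Compatibility: the complex absolute value as an `AbsoluteValue`. -/
noncomputable def Complex.abs : AbsoluteValue ℂ ℝ := NormedField.toAbsoluteValue ℂ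

lemma Complex.norm_eq_abs (z : ℂ) : ‖z‖ = Complex.abs z := rfl

lemma Complex.abs_ofReal (r : ℝ) : Complex.abs (r : ℂ) = |r| := Complex.norm_real r

lemma Complex.abs_two : Complex.abs 2 = 2 := by
  rw [← Complex.norm_eq_abs]; norm_num

lemma Complex.abs_I : Complex.abs Complex.I = 1 := Complex.norm_I

lemma Complex.abs_intCast (n : ℤ) : Complex.abs (n : ℂ) = |(n : ℝ)| := Complex.norm_intCast n

lemma Complex.continuous_abs : Continuous Complex.abs := continuous_norm

section Aux

open Real Complex

lemma F_mono : Monotone F := fun a b h => by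
  simp only [F]; have := Real.exp_le_exp.2 h; linarith

lemma F_nonneg {t : ℝ} (ht : 0 ≤ t) : 0 ≤ F t := by
  simp only [F]; nlinarith [Real.add_one_le_exp t]

lemma le_F (t : ℝ) : t ≤ F t := by
  simp only [F]; nlinarith [Real.add_one_le_exp t]

lemma F_iter_mono (n : ℕ) : Monotone (F^[n]) := F_mono.iterate n

lemma le_F_iter (n : ℕ) (t : ℝ) : t ≤ F^[n] t := by
  induction n with
  | zero => simp
  | succ n ih =>
    rw [Function.iterate_succ_apply']
    exact le_trans ih (le_F _)

lemma F_iter_nonneg (n : ℕ) {t : ℝ} (ht : 0 ≤ t) : 0 ≤ F^[n] t :=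
  le_trans ht (le_F_iter n t)

lemma Finv_F (x : ℝ) : Finv (F x) = x := by
  simp [Finv, F, Real.log_exp]

lemma F_Finv {y : ℝ} (hy : 0 ≤ y) : F (Finv y) = y := by
  simp only [Finv, F]
  rw [Real.exp_log (by linarith)]; ring

lemma Finv_nonneg {y : ℝ} (hy : 0 ≤ y) : 0 ≤ Finv y :=
  Real.log_nonneg (by linarith)

lemma Finv_mono {a b : ℝ} (ha : 0 ≤ a) (hab : a ≤ b) : Finv a ≤ Finv b :=
  Real.log_le_log (by linarith) (by linarith)

lemma Finv_iter_nonneg (n : ℕ) {y : ℝ} (hy : 0 ≤ y) : 0 ≤ Finv^[n] y := by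
  induction n generalizing y with
  | zero => simpa
  | succ n ih => rw [Function.iterate_succ_apply]; exact ih (Finv_nonneg hy)

lemma Finv_iter_mono (n : ℕ) {a b : ℝ} (ha : 0 ≤ a) (hab : a ≤ b) :
    Finv^[n] a ≤ Finv^[n] b := by
  induction n generalizing a b with
  | zero => simpa
  | succ n ih =>
    rw [Function.iterate_succ_apply, Function.iterate_succ_apply]
    exact ih (Finv_nonneg ha) (Finv_mono ha hab)

lemma Finv_iter_F_iter (n : ℕ) (x : ℝ) : Finv^[n] (F^[n] x) = x := by
  induction n generalizing x with
  | zero => simp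
  | succ n ih =>
    rw [Function.iterate_succ_apply, Function.iterate_succ_apply' (f := F), Finv_F, ih]

lemma F_iter_Finv_iter (n : ℕ) {y : ℝ} (hy : 0 ≤ y) : F^[n] (Finv^[n] y) = y := by
  induction n generalizing y with
  | zero => simp
  | succ n ih =>
    rw [Function.iterate_succ_apply (f := Finv), Function.iterate_succ_apply' (f := F)]
    rw [ih (Finv_nonneg hy), F_Finv hy]

end Aux
section Aux2

open Real Complex

/-- Hypothesis package at level `(s,t)` with parameter bound `K`. -/
def Hyp (K : ℝ) (s : ℕ → ℤ) (t : ℝ) : Prop :=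
  ∀ k, 2*K + 4*Real.pi*|(s k : ℝ)| + 2*Real.pi + 3 ≤ F^[k] t

lemma hyp_shift {K : ℝ} {s : ℕ → ℤ} {t : ℝ} (h : Hyp K s t) : Hyp K (shiftSeq s) (F t) := by
  intro k
  have := h (k+1)
  rwa [Function.iterate_succ_apply] at this

lemma hyp_t_big {K : ℝ} {s : ℕ → ℤ} {t : ℝ} (hK : 0 ≤ K) (h : Hyp K s t) : 9 ≤ t := by
  have h0 := h 0
  simp only [Function.iterate_zero_apply] at h0
  have hp := Real.pi_gt_three
  have : (0:ℝ) ≤ |(s 0 : ℝ)| := abs_nonneg _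
  nlinarith

lemma abs_two_pi_int (j : ℤ) :
    Complex.abs (2 * (Real.pi : ℂ) * Complex.I * (j : ℂ)) = 2 * Real.pi * |(j : ℝ)| := by
  rw [map_mul, map_mul, map_mul, Complex.abs_two, Complex.abs_ofReal, Complex.abs_I,
    Complex.abs_intCast, _root_.abs_of_nonneg Real.pi_pos.le, mul_one]

lemma log_lip {c : ℝ} (hc : 0 < c) {z w : ℂ} (hz : c ≤ z.re) (hw : c ≤ w.re) :
    Complex.abs (Complex.log z - Complex.log w) ≤ Complex.abs (z - w) / c := by
  have hconv : Convex ℝ {u : ℂ | c ≤ u.re} := convex_halfSpace_re_ge c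
  have hder : ∀ u ∈ {u : ℂ | c ≤ u.re}, HasDerivWithinAt Complex.log u⁻¹ {u : ℂ | c ≤ u.re} u := by
    intro u hu
    exact (Complex.hasDerivAt_log (Complex.mem_slitPlane_iff.2 (Or.inl (lt_of_lt_of_le hc hu)))).hasDerivWithinAt
  have hbound : ∀ u ∈ {u : ℂ | c ≤ u.re}, ‖u⁻¹‖ ≤ c⁻¹ := by
    intro u hu
    rw [norm_inv]
    have h1 : c ≤ ‖u‖ := le_trans hu (by simpa [Complex.norm_eq_abs] using Complex.re_le_norm u)
    exact inv_anti₀ hc h1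
  have := hconv.norm_image_sub_le_of_norm_hasDerivWithin_le hder hbound hw hz
  rw [← Complex.norm_eq_abs, ← Complex.norm_eq_abs]
  calc ‖Complex.log z - Complex.log w‖ ≤ c⁻¹ * ‖z - w‖ := this
  _ = ‖z - w‖ / c := by rw [div_eq_inv_mul]

lemma gApprox_succ (κ : ℂ) (n : ℕ) (s : ℕ → ℤ) (t : ℝ) :
    gApprox κ (n+1) s t = Lk κ (s 0) (gApprox κ n (shiftSeq s) (F t)) := rfl

/-- Boundedness and definedness of the approximants. -/
lemma lemB {K : ℝ} (hK : 0 ≤ K) :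
    ∀ (n : ℕ) (s : ℕ → ℤ) (t : ℝ) (κ : ℂ), Complex.abs κ ≤ K → Hyp K (shiftSeq s) (F t) →
      approxDefined κ n s t ∧
      Complex.abs (gApprox κ n s t - (t:ℂ)) ≤ K + 2*Real.pi*|(s 0 : ℝ)| + Real.pi + 1 := by
  intro n
  induction n with
  | zero =>
    intro s t κ hκ hyp
    refine ⟨trivial, ?_⟩
    simp only [gApprox, sub_self, map_zero]
    have := Real.pi_pos
    have := abs_nonneg ((s 0 : ℝ))
    nlinarith
  | succ n ih =>
    intro s t κ hκ hyp
    obtain ⟨hdef, hbd⟩ := ih (shiftSeq s) (F t) κ hκ (hyp_shift hyp)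
    set z := gApprox κ n (shiftSeq s) (F t) with hz
    have h0 := hyp 0
    simp only [Function.iterate_zero_apply, shiftSeq, Nat.zero_add, zero_add] at h0 hbd
    -- h0 : 2K + 4π|s 1| + 2π + 3 ≤ F t
    have hπ := Real.pi_pos
    have habs0 : (0:ℝ) ≤ |(s 1 : ℝ)| := abs_nonneg _
    have hπ3 := Real.pi_gt_three
    have hFt : 9 ≤ F t := by
      nlinarith [mul_nonneg (by positivity : (0:ℝ) ≤ 4*Real.pi) habs0]
    have hbd' : Complex.abs (z - (F t : ℂ)) ≤ F t / 2 - 1/2 := le_trans hbd (by nlinarith)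
    have hre : (F t + 1)/2 ≤ z.re := by
      have h1 : |(z - (F t : ℂ)).re| ≤ Complex.abs (z - (F t:ℂ)) := Complex.abs_re_le_norm _
      have h2 : (z - (F t:ℂ)).re = z.re - F t := by simp
      rw [h2] at h1
      have := abs_le.1 h1
      linarith [this.1]
    have hrepos : 0 < z.re := by linarith
    have hCp : z ∈ Cprime := Or.inl hrepos
    refine ⟨⟨hCp, hdef⟩, ?_⟩
    -- |z| bounds
    have hzabs_lb : (F t + 1)/2 ≤ Complex.abs z :=
      le_trans hre (Complex.re_le_norm z)
    have hzabs_ub : Complex.abs z ≤ (3/2) * (F t + 1) := by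
      have h3 : Complex.abs z ≤ Complex.abs (z - (F t:ℂ)) + F t := by
        calc Complex.abs z = Complex.abs ((z - (F t:ℂ)) + (F t:ℂ)) := by congr 1; ring
        _ ≤ Complex.abs (z - (F t:ℂ)) + Complex.abs ((F t:ℝ):ℂ) := Complex.abs.add_le _ _
        _ = Complex.abs (z - (F t:ℂ)) + F t := by
            rw [Complex.abs_ofReal, _root_.abs_of_nonneg (by linarith : (0:ℝ) ≤ F t)]
      linarith
    have hzpos : 0 < Complex.abs z := by linarith
    -- log bound
    have hlogre : |Real.log (Complex.abs z) - t| ≤ 1 := by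
      have hub : Real.log (Complex.abs z) ≤ t + 1 := by
        have h5 : Real.log (Complex.abs z) ≤ Real.log ((3/2) * (F t + 1)) :=
          Real.log_le_log hzpos hzabs_ub
        have h6 : Real.log ((3/2) * (F t + 1)) = Real.log (3/2) + Real.log (F t + 1) :=
          Real.log_mul (by norm_num) (by linarith)
        have h7 : Real.log (F t + 1) = t := by
          have : F t + 1 = Real.exp t := by simp [F]
          rw [this, Real.log_exp]
        have h8 : Real.log (3/2) ≤ 1 := by
          have := Real.log_le_sub_one_of_pos (x := 3/2) (by norm_num)
          linarith
        rw [h6, h7] at h5; linarith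
      have hlb : t - 1 ≤ Real.log (Complex.abs z) := by
        have h5 : Real.log ((F t + 1)/2) ≤ Real.log (Complex.abs z) :=
          Real.log_le_log (by linarith) hzabs_lb
        have h6 : Real.log ((F t + 1)/2) = Real.log (F t + 1) - Real.log 2 := by
          rw [Real.log_div (by linarith) (by norm_num)]
        have h7 : Real.log (F t + 1) = t := by
          have : F t + 1 = Real.exp t := by simp [F]
          rw [this, Real.log_exp]
        have h8 : Real.log 2 ≤ 1 := by
          have := Real.log_le_sub_one_of_pos (x := 2) (by norm_num)
          linarith
        rw [h6, h7] at h5; linarith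
      rw [abs_le]; constructor <;> linarith
    have hlog : Complex.abs (Complex.log z - (t:ℂ)) ≤ Real.pi + 1 := by
      have h9 : Complex.abs (Complex.log z - (t:ℂ)) ≤
          |(Complex.log z - (t:ℂ)).re| + |(Complex.log z - (t:ℂ)).im| :=
        Complex.norm_le_abs_re_add_abs_im _
      have h10 : (Complex.log z - (t:ℂ)).re = Real.log (Complex.abs z) - t := by
        simp [Complex.log_re, Complex.norm_eq_abs]
      have h11 : (Complex.log z - (t:ℂ)).im = Complex.arg z := by
        simp [Complex.log_im]
      rw [h10, h11] at h9
      have h12 : |Complex.arg z| ≤ Real.pi := Complex.abs_arg_le_pi z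
      linarith
    -- final
    rw [gApprox_succ]
    have hsplit : Lk κ (s 0) z - (t:ℂ) =
        (Complex.log z - (t:ℂ)) + (-κ) + (2 * (Real.pi : ℂ) * Complex.I * ((s 0 : ℤ) : ℂ)) := by
      simp only [Lk]; ring
    rw [hsplit]
    have tri : Complex.abs ((Complex.log z - (t:ℂ)) + (-κ) + (2 * (Real.pi : ℂ) * Complex.I * ((s 0:ℤ) : ℂ)))
        ≤ Complex.abs (Complex.log z - (t:ℂ)) + Complex.abs κ + 2*Real.pi*|(s 0 : ℝ)| := by
      calc Complex.abs ((Complex.log z - (t:ℂ)) + (-κ) + (2 * (Real.pi : ℂ) * Complex.I * ((s 0:ℤ) : ℂ)))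
          ≤ Complex.abs ((Complex.log z - (t:ℂ)) + (-κ)) + Complex.abs (2 * (Real.pi : ℂ) * Complex.I * ((s 0:ℤ) : ℂ)) :=
            Complex.abs.add_le _ _
        _ ≤ Complex.abs (Complex.log z - (t:ℂ)) + Complex.abs (-κ) + Complex.abs (2 * (Real.pi : ℂ) * Complex.I * ((s 0:ℤ) : ℂ)) := by
            have := Complex.abs.add_le (Complex.log z - (t:ℂ)) (-κ)
            linarith
        _ = Complex.abs (Complex.log z - (t:ℂ)) + Complex.abs κ + 2*Real.pi*|(s 0 : ℝ)| := by
            rw [map_neg_eq_map, abs_two_pi_int]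
    linarith

end Aux2
section Aux3

open Real Complex

/-- Real part lower bound at a level where the full hypothesis holds. -/
lemma re_big {K : ℝ} (hK : 0 ≤ K) (n : ℕ) (s : ℕ → ℤ) (t : ℝ) (κ : ℂ)
    (hκ : Complex.abs κ ≤ K) (hyp : Hyp K s t) :
    (t + 1)/2 ≤ (gApprox κ n s t).re := by
  obtain ⟨-, hbd⟩ := lemB hK n s t κ hκ (hyp_shift hyp)
  have h0 := hyp 0
  simp only [Function.iterate_zero_apply] at h0
  have hπ := Real.pi_pos
  have habs0 : (0:ℝ) ≤ |(s 0 : ℝ)| := abs_nonneg _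
  have h1 : |(gApprox κ n s t - (t:ℂ)).re| ≤ Complex.abs (gApprox κ n s t - (t:ℂ)) :=
    Complex.abs_re_le_norm _
  have h2 : (gApprox κ n s t - (t:ℂ)).re = (gApprox κ n s t).re - t := by simp
  rw [h2] at h1
  have h3 := (abs_le.1 h1).1
  have h4 : K + 2*Real.pi*|(s 0:ℝ)| + Real.pi + 1 ≤ t/2 - 1/2 := by nlinarith
  linarith

/-- Precise form of the first approximant. -/
lemma g1_form (κ : ℂ) (s : ℕ → ℤ) {t : ℝ} (ht : 0 ≤ F t) :
    gApprox κ 1 s t = ((Real.log (F t) : ℝ) : ℂ) - κ + 2 * (Real.pi : ℂ) * Complex.I * ((s 0 : ℤ) : ℂ) := by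
  rw [gApprox_succ]
  show Complex.log ((F t : ℝ) : ℂ) - κ + _ = _
  rw [← Complex.ofReal_log ht]

lemma logF_sub (t : ℝ) (ht : 1 ≤ t) :
    |Real.log (F t) - t| ≤ 2 * Real.exp (-t) := by
  have hexp : Real.exp (-t) ≤ Real.exp (-1) := Real.exp_le_exp.2 (by linarith)
  have he1 : Real.exp (-1) ≤ 1/2 := by
    rw [Real.exp_neg]
    rw [inv_le_comm₀ (Real.exp_pos 1) (by norm_num)]
    have := Real.add_one_le_exp 1
    linarith
  have hx : Real.exp (-t) ≤ 1/2 := le_trans hexp he1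
  have hxpos : 0 < Real.exp (-t) := Real.exp_pos _
  have hF : F t = Real.exp t * (1 - Real.exp (-t)) := by
    simp only [F]
    rw [Real.exp_neg]
    field_simp
  have h1 : Real.log (F t) = t + Real.log (1 - Real.exp (-t)) := by
    rw [hF, Real.log_mul (Real.exp_ne_zero t) (by linarith), Real.log_exp]
  have h2 : Real.log (1 - Real.exp (-t)) ≤ 0 :=
    Real.log_nonpos (by linarith) (by linarith)
  have h3 : -(2 * Real.exp (-t)) ≤ Real.log (1 - Real.exp (-t)) := by
    have h4 : Real.exp (-(2 * Real.exp (-t))) ≤ 1 - Real.exp (-t) := by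
      set x := Real.exp (-t)
      have h5 : 1 + 2*x ≤ Real.exp (2*x) := by
        have := Real.add_one_le_exp (2*x); linarith
      have h6 : Real.exp (-(2*x)) * Real.exp (2*x) = 1 := by
        rw [← Real.exp_add]; simp
      have h7 : 0 < Real.exp (2*x) := Real.exp_pos _
      nlinarith
    calc -(2 * Real.exp (-t)) = Real.log (Real.exp (-(2 * Real.exp (-t)))) := (Real.log_exp _).symm
    _ ≤ Real.log (1 - Real.exp (-t)) := Real.log_le_log (Real.exp_pos _) h4
  rw [h1, abs_le]
  constructor <;> linarith

end Aux3
section Aux4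

open Real Complex

lemma Lk_diff (κ : ℂ) (j : ℤ) (z w : ℂ) :
    Lk κ j z - Lk κ j w = Complex.log z - Complex.log w := by
  simp only [Lk]; ring

lemma step_contract {K : ℝ} (hK : 0 ≤ K) {s : ℕ → ℤ} {t : ℝ} {κ : ℂ}
    (hκ : Complex.abs κ ≤ K) (hyp : Hyp K (shiftSeq s) (F t)) (n m : ℕ) :
    Complex.abs (gApprox κ (n+1) s t - gApprox κ (m+1) s t) ≤
      (2 / (F t + 1)) *
        Complex.abs (gApprox κ n (shiftSeq s) (F t) - gApprox κ m (shiftSeq s) (F t)) := by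
  have hFt : 9 ≤ F t := hyp_t_big hK hyp
  have hc : 0 < (F t + 1)/2 := by linarith
  have hz := re_big hK n (shiftSeq s) (F t) κ hκ hyp
  have hw := re_big hK m (shiftSeq s) (F t) κ hκ hyp
  rw [gApprox_succ, gApprox_succ, Lk_diff]
  have := log_lip hc hz hw
  calc Complex.abs (Complex.log (gApprox κ n (shiftSeq s) (F t)) -
        Complex.log (gApprox κ m (shiftSeq s) (F t)))
      ≤ Complex.abs (gApprox κ n (shiftSeq s) (F t) - gApprox κ m (shiftSeq s) (F t)) / ((F t + 1)/2) := this
    _ = (2 / (F t + 1)) * Complex.abs (gApprox κ n (shiftSeq s) (F t) - gApprox κ m (shiftSeq s) (F t)) := by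
        field_simp

lemma lemC {K : ℝ} (hK : 0 ≤ K) :
    ∀ (n : ℕ) (s : ℕ → ℤ) (t : ℝ) (κ : ℂ), Complex.abs κ ≤ K → Hyp K s t →
      Complex.abs (gApprox κ (n+1) s t - gApprox κ n s t) ≤ (1/2)^n * (t/2) := by
  intro n
  induction n with
  | zero =>
    intro s t κ hκ hyp
    have ht : 9 ≤ t := hyp_t_big hK hyp
    have hF : (0:ℝ) ≤ F t := by linarith [le_F t]
    have hlog : |Real.log (F t) - t| ≤ 1 := by
      have h1 := logF_sub t (by linarith)
      have h2 : Real.exp (-t) ≤ Real.exp (-1) := Real.exp_le_exp.2 (by linarith)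
      have h3 : Real.exp (-1) ≤ 1/2 := by
        rw [Real.exp_neg, inv_le_comm₀ (Real.exp_pos 1) (by norm_num)]
        have := Real.add_one_le_exp 1
        linarith
      linarith [abs_nonneg (Real.log (F t) - t)]
    have h0 := hyp 0
    simp only [Function.iterate_zero_apply] at h0
    rw [g1_form κ s hF]
    have hsplit : ((Real.log (F t):ℝ):ℂ) - κ + 2*(Real.pi:ℂ)*Complex.I*((s 0:ℤ):ℂ) - gApprox κ 0 s t
        = (((Real.log (F t) - t : ℝ)):ℂ) + (-κ) + 2*(Real.pi:ℂ)*Complex.I*((s 0:ℤ):ℂ) := by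
      simp only [gApprox]
      push_cast
      ring
    rw [hsplit]
    have tri : Complex.abs ((((Real.log (F t) - t : ℝ)):ℂ) + (-κ) + 2*(Real.pi:ℂ)*Complex.I*((s 0:ℤ):ℂ))
        ≤ |Real.log (F t) - t| + Complex.abs κ + 2*Real.pi*|(s 0:ℝ)| := by
      calc Complex.abs ((((Real.log (F t) - t : ℝ)):ℂ) + (-κ) + 2*(Real.pi:ℂ)*Complex.I*((s 0:ℤ):ℂ))
          ≤ Complex.abs ((((Real.log (F t) - t : ℝ)):ℂ) + (-κ)) + Complex.abs (2*(Real.pi:ℂ)*Complex.I*((s 0:ℤ):ℂ)) :=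
            Complex.abs.add_le _ _
        _ ≤ Complex.abs (((Real.log (F t) - t : ℝ)):ℂ) + Complex.abs (-κ) + Complex.abs (2*(Real.pi:ℂ)*Complex.I*((s 0:ℤ):ℂ)) := by
            linarith [Complex.abs.add_le ((((Real.log (F t) - t : ℝ)):ℂ)) (-κ)]
        _ = |Real.log (F t) - t| + Complex.abs κ + 2*Real.pi*|(s 0:ℝ)| := by
            rw [map_neg_eq_map, abs_two_pi_int, Complex.abs_ofReal]
    have hπ := Real.pi_pos
    have habs0 : (0:ℝ) ≤ |(s 0:ℝ)| := abs_nonneg _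
    have : (1:ℝ)/2 ^ 0 = 1 := by norm_num
    calc Complex.abs _ ≤ |Real.log (F t) - t| + Complex.abs κ + 2*Real.pi*|(s 0:ℝ)| := tri
      _ ≤ 1 + K + 2*Real.pi*|(s 0:ℝ)| := by linarith
      _ ≤ (1/2)^0 * (t/2) := by simp only [pow_zero, one_mul]; nlinarith
  | succ n ih =>
    intro s t κ hκ hyp
    have ht : 9 ≤ t := hyp_t_big hK hyp
    have hFt : 9 ≤ F t := by linarith [le_F t]
    have h1 := step_contract hK hκ (hyp_shift hyp) (n+1) n
    have h2 := ih (shiftSeq s) (F t) κ hκ (hyp_shift hyp)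
    have h3 : (2/(F t + 1)) * ((1/2)^n * (F t/2)) ≤ (1/2)^(n+1) * (t/2) := by
      have hp : (0:ℝ) < (1/2)^n := by positivity
      rw [pow_succ]
      have e1 : (2/(F t + 1)) * ((1/2)^n * (F t/2)) = (1/2)^n * (F t/(F t + 1)) := by
        field_simp
      have e2 : (1/2)^n * (1/2) * (t/2) = (1/2)^n * (t/4) := by ring
      rw [e1, e2]
      have h4 : F t/(F t + 1) ≤ 1 := by
        rw [div_le_one (by linarith)]; linarith
      have h5 : (1:ℝ) ≤ t/4 := by linarith
      nlinarith
    calc Complex.abs (gApprox κ (n+1+1) s t - gApprox κ (n+1) s t)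
        ≤ (2/(F t + 1)) * Complex.abs (gApprox κ (n+1) (shiftSeq s) (F t) - gApprox κ n (shiftSeq s) (F t)) := h1
      _ ≤ (2/(F t + 1)) * ((1/2)^n * (F t/2)) := by
          apply mul_le_mul_of_nonneg_left h2
          positivity
      _ ≤ (1/2)^(n+1) * (t/2) := h3

lemma lemC' {K : ℝ} (hK : 0 ≤ K) (s : ℕ → ℤ) (t : ℝ) (κ : ℂ)
    (hκ : Complex.abs κ ≤ K) (hyp : Hyp K (shiftSeq s) (F t)) (n : ℕ) :
    Complex.abs (gApprox κ (n+2) s t - gApprox κ (n+1) s t) ≤ (1/2)^n := by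
  have hFt : 9 ≤ F t := hyp_t_big hK hyp
  have h1 := step_contract hK hκ hyp (n+1) n
  have h2 := lemC hK n (shiftSeq s) (F t) κ hκ hyp
  have h3 : (2/(F t + 1)) * ((1/2)^n * (F t/2)) ≤ (1/2)^n := by
    have hp : (0:ℝ) < (1/2)^n := by positivity
    have e1 : (2/(F t + 1)) * ((1/2)^n * (F t/2)) = (1/2)^n * (F t/(F t + 1)) := by
      field_simp
    rw [e1]
    have h4 : F t/(F t + 1) ≤ 1 := by
      rw [div_le_one (by linarith)]; linarith
    nlinarith
  calc Complex.abs (gApprox κ (n+2) s t - gApprox κ (n+1) s t)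
      ≤ (2/(F t + 1)) * Complex.abs (gApprox κ (n+1) (shiftSeq s) (F t) - gApprox κ n (shiftSeq s) (F t)) := h1
    _ ≤ (2/(F t + 1)) * ((1/2)^n * (F t/2)) := by
        apply mul_le_mul_of_nonneg_left h2
        positivity
    _ ≤ (1/2)^n := h3

end Aux4
section Aux5

open Real Complex Filter

lemma ray_eq {κ : ℂ} {s : ℕ → ℤ} {t : ℝ} {z : ℂ} (h : RayTendsto κ s t z) :
    ray κ s t = z := by
  have hex : ∃ w, RayTendsto κ s t w := ⟨z, h⟩
  simp only [ray, dif_pos hex]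
  exact tendsto_nhds_unique hex.choose_spec.2 h.2

lemma d0_est {K : ℝ} (hK : 0 ≤ K) (s : ℕ → ℤ) (t : ℝ) (κ : ℂ)
    (hκ : Complex.abs κ ≤ K) (ht : 9 ≤ t) :
    Complex.abs (gApprox κ 1 s t - gApprox κ 0 s t) ≤ 1 + K + 2*Real.pi*|(s 0:ℝ)| := by
  have hF : (0:ℝ) ≤ F t := by linarith [le_F t]
  have hlog : |Real.log (F t) - t| ≤ 1 := by
    have h1 := logF_sub t (by linarith)
    have h2 : Real.exp (-t) ≤ Real.exp (-1) := Real.exp_le_exp.2 (by linarith)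
    have h3 : Real.exp (-1) ≤ 1/2 := by
      rw [Real.exp_neg, inv_le_comm₀ (Real.exp_pos 1) (by norm_num)]
      have := Real.add_one_le_exp 1
      linarith
    linarith [abs_nonneg (Real.log (F t) - t)]
  rw [g1_form κ s hF]
  have hsplit : ((Real.log (F t):ℝ):ℂ) - κ + 2*(Real.pi:ℂ)*Complex.I*((s 0:ℤ):ℂ) - gApprox κ 0 s t
      = (((Real.log (F t) - t : ℝ)):ℂ) + (-κ) + 2*(Real.pi:ℂ)*Complex.I*((s 0:ℤ):ℂ) := by
    simp only [gApprox]
    push_cast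
    ring
  rw [hsplit]
  calc Complex.abs ((((Real.log (F t) - t : ℝ)):ℂ) + (-κ) + 2*(Real.pi:ℂ)*Complex.I*((s 0:ℤ):ℂ))
      ≤ Complex.abs ((((Real.log (F t) - t : ℝ)):ℂ) + (-κ)) + Complex.abs (2*(Real.pi:ℂ)*Complex.I*((s 0:ℤ):ℂ)) :=
        Complex.abs.add_le _ _
    _ ≤ Complex.abs (((Real.log (F t) - t : ℝ)):ℂ) + Complex.abs (-κ) + Complex.abs (2*(Real.pi:ℂ)*Complex.I*((s 0:ℤ):ℂ)) := by
        linarith [Complex.abs.add_le ((((Real.log (F t) - t : ℝ)):ℂ)) (-κ)]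
    _ = |Real.log (F t) - t| + Complex.abs κ + 2*Real.pi*|(s 0:ℝ)| := by
        rw [map_neg_eq_map, abs_two_pi_int, Complex.abs_ofReal]
    _ ≤ 1 + K + 2*Real.pi*|(s 0:ℝ)| := by linarith

lemma lemQ {K : ℝ} (hK : 0 ≤ K) (s : ℕ → ℤ) (t : ℝ) (κ : ℂ)
    (hκ : Complex.abs κ ≤ K) (hyp : Hyp K (shiftSeq s) (F t)) :
    ∀ N, Complex.abs (gApprox κ (N+2) s t - gApprox κ 1 s t)
      ≤ 2*Real.exp (-t) * ((K + 2*Real.pi*|(s 1:ℝ)| + 1) + 2 - 4*(1/2)^(N+1)) := by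
  have hFt : 9 ≤ F t := hyp_t_big hK hyp
  have hFt1 : F t + 1 = Real.exp t := by simp [F]
  have hE : (2:ℝ)/(F t + 1) = 2*Real.exp (-t) := by
    rw [hFt1, Real.exp_neg]
    field_simp
  intro N
  induction N with
  | zero =>
    have h1 := step_contract hK hκ hyp 1 0
    have h2 := d0_est hK (shiftSeq s) (F t) κ hκ hFt
    have h3 : Complex.abs (gApprox κ 2 s t - gApprox κ 1 s t)
        ≤ 2*Real.exp (-t) * (1 + K + 2*Real.pi*|(s 1:ℝ)|) := by
      calc Complex.abs (gApprox κ 2 s t - gApprox κ 1 s t)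
          ≤ (2/(F t + 1)) * Complex.abs (gApprox κ 1 (shiftSeq s) (F t) - gApprox κ 0 (shiftSeq s) (F t)) := h1
        _ ≤ (2/(F t + 1)) * (1 + K + 2*Real.pi*|(s 1:ℝ)|) := by
            apply mul_le_mul_of_nonneg_left _ (by positivity)
            simpa [shiftSeq] using h2
        _ = 2*Real.exp (-t) * (1 + K + 2*Real.pi*|(s 1:ℝ)|) := by rw [hE]
    have hexp : (0:ℝ) ≤ Real.exp (-t) := (Real.exp_pos _).le
    calc Complex.abs (gApprox κ 2 s t - gApprox κ 1 s t)
        ≤ 2*Real.exp (-t) * (1 + K + 2*Real.pi*|(s 1:ℝ)|) := h3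
      _ ≤ 2*Real.exp (-t) * ((K + 2*Real.pi*|(s 1:ℝ)| + 1) + 2 - 4*(1/2)^(0+1)) := by
          apply mul_le_mul_of_nonneg_left _ (by positivity)
          norm_num
          linarith
  | succ N ih =>
    have h1 := step_contract hK hκ hyp (N+2) (N+1)
    have h2 := lemC' hK (shiftSeq s) (F t) κ hκ (hyp_shift hyp) N
    have hfirst : Complex.abs (gApprox κ (N+3) s t - gApprox κ (N+2) s t)
        ≤ 2*Real.exp (-t) * (1/2)^N := by
      calc Complex.abs (gApprox κ (N+3) s t - gApprox κ (N+2) s t)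
          ≤ (2/(F t + 1)) * Complex.abs (gApprox κ (N+2) (shiftSeq s) (F t) - gApprox κ (N+1) (shiftSeq s) (F t)) := h1
        _ ≤ (2/(F t + 1)) * (1/2)^N := by
            apply mul_le_mul_of_nonneg_left h2 (by positivity)
        _ = 2*Real.exp (-t) * (1/2)^N := by rw [hE]
    have htri : Complex.abs (gApprox κ (N+3) s t - gApprox κ 1 s t)
        ≤ Complex.abs (gApprox κ (N+3) s t - gApprox κ (N+2) s t)
          + Complex.abs (gApprox κ (N+2) s t - gApprox κ 1 s t) := by
      have := Complex.abs.add_le (gApprox κ (N+3) s t - gApprox κ (N+2) s t)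
        (gApprox κ (N+2) s t - gApprox κ 1 s t)
      calc Complex.abs (gApprox κ (N+3) s t - gApprox κ 1 s t)
          = Complex.abs ((gApprox κ (N+3) s t - gApprox κ (N+2) s t) + (gApprox κ (N+2) s t - gApprox κ 1 s t)) := by
            congr 1; ring
        _ ≤ _ := this
    have hkey : 2*Real.exp (-t) * ((K + 2*Real.pi*|(s 1:ℝ)| + 1) + 2 - 4*(1/2)^(N+1+1))
        = 2*Real.exp (-t) * ((K + 2*Real.pi*|(s 1:ℝ)| + 1) + 2 - 4*(1/2)^(N+1)) + 2*Real.exp (-t) * (1/2)^N := by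
      rw [pow_succ, pow_succ]
      ring
    rw [hkey]
    calc Complex.abs (gApprox κ (N+1+2) s t - gApprox κ 1 s t)
        ≤ Complex.abs (gApprox κ (N+3) s t - gApprox κ (N+2) s t)
          + Complex.abs (gApprox κ (N+2) s t - gApprox κ 1 s t) := htri
      _ ≤ 2*Real.exp (-t) * (1/2)^N
          + 2*Real.exp (-t) * ((K + 2*Real.pi*|(s 1:ℝ)| + 1) + 2 - 4*(1/2)^(N+1)) := by
          exact add_le_add hfirst ih
      _ = _ := by ring

end Aux5
section Aux6

open Real Complex Filter

lemma master {K : ℝ} (hK : 0 ≤ K) (s : ℕ → ℤ) (t : ℝ) (κ : ℂ)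
    (hκ : Complex.abs κ ≤ K) (hyp : Hyp K (shiftSeq s) (F t)) (ht : 9 ≤ t) :
    RayTendsto κ s t (ray κ s t) ∧
    (∀ m, Complex.abs (ray κ s t - gApprox κ (m+1) s t) ≤ 2*(1/2)^m) ∧
    Complex.abs (ray κ s t - ((t:ℂ) - κ + 2*(Real.pi:ℂ)*Complex.I*((s 0:ℤ):ℂ)))
      ≤ 2*Real.exp (-t)*(K + 2*Real.pi*|(s 1:ℝ)| + 4) := by
  have hπ := Real.pi_pos
  have habs0 : (0:ℝ) ≤ |(s 0:ℝ)| := abs_nonneg _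
  set C : ℝ := K + 2*Real.pi*|(s 0:ℝ)| + 3 with hC
  have hC2 : (2:ℝ) ≤ C := by nlinarith
  have hcauchy : CauchySeq (fun n => gApprox κ n s t) := by
    apply cauchySeq_of_le_geometric (1/2) C (by norm_num)
    intro n
    match n with
    | 0 =>
      rw [Complex.dist_eq, Complex.norm_eq_abs, Complex.abs.map_sub]
      have := d0_est hK s t κ hκ ht
      simpa using this.trans (by nlinarith)
    | (m+1) =>
      rw [Complex.dist_eq, Complex.norm_eq_abs, Complex.abs.map_sub]
      have h1 := lemC' hK s t κ hκ hyp m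
      have h2 : ((1:ℝ)/2)^m = 2*(1/2)^(m+1) := by rw [pow_succ]; ring
      calc Complex.abs (gApprox κ (m+2) s t - gApprox κ (m+1) s t) ≤ (1/2)^m := h1
        _ ≤ C * (1/2)^(m+1) := by
            rw [h2]
            have hp : (0:ℝ) < (1/2:ℝ)^(m+1) := by positivity
            nlinarith
  obtain ⟨z, hz⟩ := cauchySeq_tendsto_of_complete hcauchy
  have hRT : RayTendsto κ s t z :=
    ⟨Filter.Eventually.of_forall (fun n => (lemB hK n s t κ hκ hyp).1), hz⟩
  have hray : ray κ s t = z := ray_eq hRT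
  -- partial-sum tail bound
  have hU : ∀ m p, Complex.abs (gApprox κ (m+p+1) s t - gApprox κ (m+1) s t)
      ≤ 2*((1/2)^m - (1/2)^(m+p)) := by
    intro m p
    induction p with
    | zero => simp
    | succ p ih =>
      have h1 := lemC' hK s t κ hκ hyp (m+p)
      have htri : Complex.abs (gApprox κ (m+p+2) s t - gApprox κ (m+1) s t)
          ≤ Complex.abs (gApprox κ (m+p+2) s t - gApprox κ (m+p+1) s t)
            + Complex.abs (gApprox κ (m+p+1) s t - gApprox κ (m+1) s t) := by
        calc Complex.abs (gApprox κ (m+p+2) s t - gApprox κ (m+1) s t)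
            = Complex.abs ((gApprox κ (m+p+2) s t - gApprox κ (m+p+1) s t)
              + (gApprox κ (m+p+1) s t - gApprox κ (m+1) s t)) := by congr 1; ring
          _ ≤ _ := Complex.abs.add_le _ _
      have hkey : 2*((1/2:ℝ)^m - (1/2)^(m+(p+1))) = (1/2)^(m+p) + 2*((1/2)^m - (1/2)^(m+p)) := by
        rw [show m+(p+1) = (m+p)+1 by omega, pow_succ]
        ring
      rw [show m+(p+1)+1 = m+p+2 by omega, hkey]
      calc Complex.abs (gApprox κ (m+p+2) s t - gApprox κ (m+1) s t)
          ≤ Complex.abs (gApprox κ (m+p+2) s t - gApprox κ (m+p+1) s t)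
            + Complex.abs (gApprox κ (m+p+1) s t - gApprox κ (m+1) s t) := htri
        _ ≤ (1/2)^(m+p) + 2*((1/2)^m - (1/2)^(m+p)) := add_le_add h1 ih
  have htail : ∀ m, Complex.abs (z - gApprox κ (m+1) s t) ≤ 2*(1/2)^m := by
    intro m
    have hcomp : Tendsto (fun p => gApprox κ (m+p+1) s t) atTop (nhds z) := by
      have hfe : (fun p => gApprox κ (m+p+1) s t) = (fun n => gApprox κ n s t) ∘ (fun p => p + (m+1)) := by
        funext p; simp only [Function.comp]; congr 1; omega
      rw [hfe]
      exact hz.comp (tendsto_add_atTop_nat (m+1))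
    have h2 : Tendsto (fun p => Complex.abs (gApprox κ (m+p+1) s t - gApprox κ (m+1) s t))
        atTop (nhds (Complex.abs (z - gApprox κ (m+1) s t))) :=
      (Complex.continuous_abs.tendsto _).comp (hcomp.sub tendsto_const_nhds)
    refine le_of_tendsto h2 (Filter.Eventually.of_forall fun p => ?_)
    refine (hU m p).trans ?_
    have : (0:ℝ) ≤ (1/2:ℝ)^(m+p) := by positivity
    linarith
  -- tail bound from g1
  set D : ℝ := K + 2*Real.pi*|(s 1:ℝ)| + 1 with hD
  have hg1 : Complex.abs (z - gApprox κ 1 s t) ≤ 2*Real.exp (-t)*(D + 2) := by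
    have hcomp : Tendsto (fun N => gApprox κ (N+2) s t) atTop (nhds z) := by
      have hfe : (fun N => gApprox κ (N+2) s t) = (fun n => gApprox κ n s t) ∘ (fun N => N + 2) := by
        funext N; rfl
      rw [hfe]
      exact hz.comp (tendsto_add_atTop_nat 2)
    have h2 : Tendsto (fun N => Complex.abs (gApprox κ (N+2) s t - gApprox κ 1 s t))
        atTop (nhds (Complex.abs (z - gApprox κ 1 s t))) :=
      (Complex.continuous_abs.tendsto _).comp (hcomp.sub tendsto_const_nhds)
    refine le_of_tendsto h2 (Filter.Eventually.of_forall fun N => ?_)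
    refine (lemQ hK s t κ hκ hyp N).trans ?_
    have h3 : (0:ℝ) ≤ (1/2:ℝ)^(N+1) := by positivity
    have h4 : (0:ℝ) ≤ Real.exp (-t) := (Real.exp_pos _).le
    rw [hD]
    nlinarith
  have hF : (0:ℝ) ≤ F t := by linarith [le_F t]
  have hlog := logF_sub t (by linarith)
  have hfinal : Complex.abs (z - ((t:ℂ) - κ + 2*(Real.pi:ℂ)*Complex.I*((s 0:ℤ):ℂ)))
      ≤ 2*Real.exp (-t)*(K + 2*Real.pi*|(s 1:ℝ)| + 4) := by
    have hdiff : gApprox κ 1 s t - ((t:ℂ) - κ + 2*(Real.pi:ℂ)*Complex.I*((s 0:ℤ):ℂ))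
        = (((Real.log (F t) - t : ℝ)):ℂ) := by
      rw [g1_form κ s hF]
      push_cast
      ring
    have htri : Complex.abs (z - ((t:ℂ) - κ + 2*(Real.pi:ℂ)*Complex.I*((s 0:ℤ):ℂ)))
        ≤ Complex.abs (z - gApprox κ 1 s t)
          + Complex.abs (gApprox κ 1 s t - ((t:ℂ) - κ + 2*(Real.pi:ℂ)*Complex.I*((s 0:ℤ):ℂ))) := by
      calc Complex.abs (z - ((t:ℂ) - κ + 2*(Real.pi:ℂ)*Complex.I*((s 0:ℤ):ℂ)))
          = Complex.abs ((z - gApprox κ 1 s t)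
            + (gApprox κ 1 s t - ((t:ℂ) - κ + 2*(Real.pi:ℂ)*Complex.I*((s 0:ℤ):ℂ)))) := by congr 1; ring
        _ ≤ _ := Complex.abs.add_le _ _
    rw [hdiff, Complex.abs_ofReal] at htri
    have h4 : (0:ℝ) ≤ Real.exp (-t) := (Real.exp_pos _).le
    rw [hD] at hg1
    nlinarith
  rw [hray]
  exact ⟨hRT, htail, hfinal⟩

end Aux6
section Aux7

open Real Complex Filter Metric

lemma memball_abs {K : ℝ} {κ : ℂ} (h : κ ∈ Metric.ball (0:ℂ) K) : Complex.abs κ ≤ K :=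
  le_of_lt (by simpa [Complex.norm_eq_abs] using mem_ball_zero_iff.1 h)

lemma lemDiff {K : ℝ} (hK : 0 ≤ K) :
    ∀ (n : ℕ) (s : ℕ → ℤ) (t : ℝ), Hyp K (shiftSeq s) (F t) →
      DifferentiableOn ℂ (fun κ => gApprox κ n s t) (Metric.ball (0:ℂ) K) := by
  intro n
  induction n with
  | zero =>
    intro s t _
    exact differentiableOn_const _
  | succ n ih =>
    intro s t hyp
    have hG := ih (shiftSeq s) (F t) (hyp_shift hyp)
    have hFt : 9 ≤ F t := hyp_t_big hK hyp
    have hslit : ∀ x ∈ Metric.ball (0:ℂ) K,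
        gApprox x n (shiftSeq s) (F t) ∈ Complex.slitPlane := by
      intro x hx
      have := re_big hK n (shiftSeq s) (F t) x (memball_abs hx) hyp
      exact Complex.mem_slitPlane_iff.2 (Or.inl (by linarith))
    have hclog := hG.clog hslit
    have heq : (fun κ => gApprox κ (n+1) s t)
        = fun κ => Complex.log (gApprox κ n (shiftSeq s) (F t)) - κ
            + 2*(Real.pi:ℂ)*Complex.I*((s 0:ℤ):ℂ) := by
      funext κ; rw [gApprox_succ]; rfl
    rw [heq]
    exact (hclog.sub differentiableOn_id).add (differentiableOn_const _)

lemma rayUnif {K : ℝ} (hK : 0 ≤ K) (s : ℕ → ℤ) (t : ℝ)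
    (hyp : Hyp K (shiftSeq s) (F t)) (ht : 9 ≤ t) :
    TendstoUniformlyOn (fun n κ => gApprox κ n s t) (fun κ => ray κ s t) atTop
      (Metric.ball (0:ℂ) K) := by
  rw [Metric.tendstoUniformlyOn_iff]
  intro ε hε
  obtain ⟨m, hm⟩ : ∃ m : ℕ, 2*(1/2:ℝ)^m < ε := by
    obtain ⟨m, hm⟩ := exists_pow_lt_of_lt_one (half_pos hε) (by norm_num : (1/2:ℝ) < 1)
    exact ⟨m, by linarith⟩
  filter_upwards [eventually_ge_atTop (m+1)] with n hn
  intro κ hκ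
  have hκ' : Complex.abs κ ≤ K := memball_abs hκ
  obtain ⟨p, rfl⟩ := Nat.exists_eq_add_of_le hn
  have hmain := (master hK s t κ hκ' hyp ht).2.1 (m+p)
  rw [Complex.dist_eq]
  rw [show m+1+p = (m+p)+1 by omega]
  have hple : ((1:ℝ)/2)^(m+p) ≤ (1/2)^m :=
    pow_le_pow_of_le_one (by norm_num) (by norm_num) (by omega)
  calc Complex.abs (ray κ s t - gApprox κ ((m+p)+1) s t) ≤ 2*(1/2)^(m+p) := hmain
    _ ≤ 2*(1/2)^m := by linarith
    _ < ε := hm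

lemma rayDiff {K : ℝ} (hK : 0 ≤ K) (s : ℕ → ℤ) (t : ℝ)
    (hyp : Hyp K (shiftSeq s) (F t)) (ht : 9 ≤ t) :
    DifferentiableOn ℂ (fun κ => ray κ s t) (Metric.ball (0:ℂ) K) :=
  (rayUnif hK s t hyp ht).tendstoLocallyUniformlyOn.differentiableOn
    (Filter.Eventually.of_forall (fun n => lemDiff hK n s t hyp)) Metric.isOpen_ball

end Aux7
section Aux8

open Real Complex Filter

lemma exp_big {t : ℝ} (ht : 20 ≤ t) : 216 + 54*t ≤ Real.exp t := by
  have h1 : t/4 + 1 ≤ Real.exp (t/4) := Real.add_one_le_exp _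
  have h2 : ((t/4+1):ℝ)^4 ≤ (Real.exp (t/4))^4 :=
    pow_le_pow_left₀ (by linarith) h1 4
  have h3 : (Real.exp (t/4))^4 = Real.exp t := by
    rw [← Real.exp_nat_mul]
    congr 1
    push_cast
    ring
  have h4 : (6:ℝ) ≤ t/4 + 1 := by linarith
  have h5 : (6:ℝ)^3 ≤ (t/4+1)^3 := pow_le_pow_left₀ (by norm_num) h4 3
  have h6 : (216:ℝ)*(t/4+1) ≤ (t/4+1)^4 := by
    have : ((t/4+1):ℝ)^4 = (t/4+1)^3 * (t/4+1) := by ring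
    rw [this]
    have h7 : (0:ℝ) ≤ t/4+1 := by linarith
    nlinarith
  nlinarith

lemma growthL {a t : ℝ} (ha : 0 ≤ a) (ht : a + 20 ≤ t) :
    ∀ n : ℕ, F^[n+1] a + 13*t + 13 ≤ F^[n+1] t := by
  intro n
  induction n with
  | zero =>
    show F a + 13*t + 13 ≤ F t
    have ht20 : 20 ≤ t := by linarith
    have hea : Real.exp a ≤ Real.exp (t - 20) := Real.exp_le_exp.2 (by linarith)
    have h2 : Real.exp (t-20) * Real.exp 20 = Real.exp t := by
      rw [← Real.exp_add]; ring_nf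
    have h20 : (21:ℝ) ≤ Real.exp 20 := by
      have := Real.add_one_le_exp (20:ℝ); linarith
    have hpos : (0:ℝ) < Real.exp (t-20) := Real.exp_pos _
    have h3 : Real.exp (t-20) ≤ Real.exp t / 21 := by
      rw [le_div_iff₀ (by norm_num)]
      nlinarith
    have h4 := exp_big ht20
    simp only [F]
    nlinarith
  | succ n ih =>
    have hu : 0 ≤ F^[n+1] a := F_iter_nonneg _ ha
    have hv : (0:ℝ) ≤ 13*t + 13 := by linarith
    rw [Function.iterate_succ_apply' (f := F) (n := n+1), Function.iterate_succ_apply' (f := F) (n := n+1)]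
    have hmono := F_mono ih
    refine le_trans ?_ hmono
    simp only [F]
    have h1 : Real.exp (F^[n+1] a + (13*t+13)) = Real.exp (F^[n+1] a) * Real.exp (13*t+13) := by
      rw [← Real.exp_add]
    have h2 : 1 ≤ Real.exp (F^[n+1] a) := Real.one_le_exp_iff.2 hu
    have h3 : 1 + (13*t+13) ≤ Real.exp (13*t+13) := by
      have := Real.add_one_le_exp (13*t+13); linarith
    have h4 : (0:ℝ) < Real.exp (F^[n+1] a) := Real.exp_pos _
    calc Real.exp (F^[n+1] a) - 1 + 13*t + 13
        ≤ Real.exp (F^[n+1] a) * Real.exp (13*t+13) - 1 := by nlinarith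
      _ = Real.exp (F^[n+1] a + (13*t+13)) - 1 := by rw [h1]
      _ = Real.exp (F^[n+1] a + 13*t + 13) - 1 := by ring_nf

lemma thirteen {B : ℝ} (hB : 0 ≤ B) :
    ∀ n : ℕ, 13 * F^[n+1] B ≤ F^[n+1] (B + 13) := by
  intro n
  induction n with
  | zero =>
    show 13 * F B ≤ F (B + 13)
    simp only [F]
    have h1 : Real.exp (B+13) = Real.exp B * Real.exp 13 := by rw [← Real.exp_add]
    have h2 : (14:ℝ) ≤ Real.exp 13 := by
      have := Real.add_one_le_exp (13:ℝ); linarith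
    have h3 : 1 ≤ Real.exp B := Real.one_le_exp_iff.2 hB
    nlinarith
  | succ n ih =>
    have hu : 0 ≤ F^[n+1] B := F_iter_nonneg _ hB
    rw [Function.iterate_succ_apply' (f := F) (n := n+1), Function.iterate_succ_apply' (f := F) (n := n+1)]
    simp only [F]
    set u := F^[n+1] B
    set u' := F^[n+1] (B+13)
    have h1 : Real.exp (13*u) ≤ Real.exp u' := Real.exp_le_exp.2 ih
    have h2 : Real.exp (13*u) = (Real.exp u)^(13:ℕ) := by
      rw [← Real.exp_nat_mul]; norm_num
    have h3 : 1 + (13:ℕ)*(Real.exp u - 1) ≤ (1 + (Real.exp u - 1))^(13:ℕ) :=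
      one_add_mul_le_pow (by nlinarith [Real.exp_pos u]) 13
    have h4 : (1 + (Real.exp u - 1)) = Real.exp u := by ring
    rw [h4] at h3
    push_cast at h3
    nlinarith

lemma F_iter_pos {x : ℝ} (hx : 0 < x) (n : ℕ) : 0 < F^[n] x :=
  lt_of_lt_of_le hx (le_F_iter n x)

lemma F_superadd {a b : ℝ} (ha : 0 ≤ a) (hb : 0 ≤ b) : F a + F b ≤ F (a+b) := by
  simp only [F]
  have h1 : Real.exp (a+b) = Real.exp a * Real.exp b := by rw [← Real.exp_add]
  have h2 : 1 ≤ Real.exp a := Real.one_le_exp_iff.2 ha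
  have h3 : 1 ≤ Real.exp b := Real.one_le_exp_iff.2 hb
  nlinarith

lemma F_iter_superadd {a b : ℝ} (ha : 0 ≤ a) (hb : 0 ≤ b) :
    ∀ n : ℕ, F^[n] a + F^[n] b ≤ F^[n] (a+b) := by
  intro n
  induction n with
  | zero => simp
  | succ n ih =>
    rw [Function.iterate_succ_apply' (f := F), Function.iterate_succ_apply' (f := F),
      Function.iterate_succ_apply' (f := F)]
    calc F (F^[n] a) + F (F^[n] b) ≤ F (F^[n] a + F^[n] b) :=
          F_superadd (F_iter_nonneg _ ha) (F_iter_nonneg _ hb)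
      _ ≤ F (F^[n] (a+b)) := F_mono ih

lemma F_one_iter (m : ℕ) : 1 + (m:ℝ)/2 ≤ F^[m] 1 := by
  induction m with
  | zero => norm_num
  | succ m ih =>
    rw [Function.iterate_succ_apply' (f := F)]
    have h1 : F (1 + (m:ℝ)/2) ≤ F (F^[m] 1) := F_mono ih
    refine le_trans ?_ h1
    simp only [F]
    set y : ℝ := 1 + (m:ℝ)/2 with hydef
    have hm0 : (0:ℝ) ≤ (m:ℝ)/2 := by positivity
    have hy : 1 ≤ y := by rw [hydef]; linarith
    have h2 : Real.exp y = Real.exp 1 * Real.exp (y - 1) := by rw [← Real.exp_add]; ring_nf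
    have h3 : y ≤ Real.exp (y-1) := by
      have := Real.add_one_le_exp (y-1); linarith
    have h4 : (2.7182818283:ℝ) < Real.exp 1 := Real.exp_one_gt_d9
    have h5 : 0 < Real.exp (y-1) := Real.exp_pos _
    have h6 : 2.7182818283 * y ≤ Real.exp 1 * Real.exp (y-1) := by
      have a1 : 2.7182818283*y ≤ 2.7182818283*Real.exp (y-1) := mul_le_mul_of_nonneg_left h3 (by norm_num)
      have a2 : 2.7182818283*Real.exp (y-1) ≤ Real.exp 1 * Real.exp (y-1) :=
        mul_le_mul_of_nonneg_right h4.le h5.le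
      linarith
    rw [← h2] at h6
    have hcast : ((m+1:ℕ):ℝ) = (m:ℝ) + 1 := by push_cast; ring
    rw [hcast, hydef]
    nlinarith

end Aux8
section Aux9

open Real Complex Filter

lemma tstar_le {s : ℕ → ℤ} {x : ℝ} (hxb : ∀ k, |(s k:ℝ)| ≤ F^[k] x) :
    tstar s ≤ ENNReal.ofReal x := by
  refine iSup_le fun n => ENNReal.ofReal_le_ofReal ?_
  have h1 : Finv^[n] |(s n:ℝ)| ≤ Finv^[n] (F^[n] x) :=
    Finv_iter_mono n (abs_nonneg _) (hxb n)
  rwa [Finv_iter_F_iter] at h1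

lemma s_le_tstarR {s : ℕ → ℤ} (hfin : tstar s ≠ ⊤) (n : ℕ) :
    |(s n:ℝ)| ≤ F^[n] (tstarR s) := by
  have h2 : ENNReal.ofReal (Finv^[n] |(s n:ℝ)|) ≤ tstar s :=
    le_iSup (fun n => ENNReal.ofReal (Finv^[n] |(s n : ℝ)|)) n
  have h3 := ENNReal.toReal_mono hfin h2
  rw [ENNReal.toReal_ofReal (Finv_iter_nonneg n (abs_nonneg _))] at h3
  have h4 : F^[n] (Finv^[n] |(s n:ℝ)|) ≤ F^[n] (tstarR s) := F_iter_mono n h3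
  rwa [F_iter_Finv_iter n (abs_nonneg _)] at h4

lemma tmin_le {s : ℕ → ℤ} {x : ℝ} (hx : 0 < x) (hxb : ∀ k, |(s k:ℝ)| ≤ F^[k] x) :
    tmin s ≤ ENNReal.ofReal (x+1) := by
  apply sInf_le
  refine ⟨x+1, by linarith, rfl, ?_⟩
  have key : Tendsto (fun n => |(s n:ℝ)| / F^[n] (x+1)) atTop (nhds 0) := by
    rw [← tendsto_add_atTop_iff_nat 1]
    have hub : ∀ m : ℕ, |(s (m+1):ℝ)| / F^[m+1] (x+1) ≤ Real.exp (-(1+(m:ℝ)/2)) := by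
      intro m
      have hm0 : (0:ℝ) ≤ (m:ℝ) := Nat.cast_nonneg m
      have hpx : 0 < F^[m+1] x := F_iter_pos hx _
      have hpx1 : 0 < F^[m+1] (x+1) := F_iter_pos (by linarith) _
      have hone := F_one_iter m
      have hkey : Real.exp (F^[m] 1) * F^[m+1] x ≤ F^[m+1] (x+1) := by
        have h1 : F^[m] x + F^[m] 1 ≤ F^[m] (x+1) := F_iter_superadd (le_of_lt hx) zero_le_one m
        have h2 : F (F^[m] x + F^[m] 1) ≤ F (F^[m] (x+1)) := F_mono h1
        rw [Function.iterate_succ_apply' (f := F) (n := m) (x := x),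
          Function.iterate_succ_apply' (f := F) (n := m) (x := x+1)]
        refine le_trans ?_ h2
        simp only [F]
        have h3 : Real.exp (F^[m] x + F^[m] 1) = Real.exp (F^[m] x) * Real.exp (F^[m] 1) := by
          rw [← Real.exp_add]
        have h4 : 1 ≤ Real.exp (F^[m] 1) := Real.one_le_exp_iff.2 (by linarith)
        nlinarith [Real.exp_pos (F^[m] x)]
      have step1 : |(s (m+1):ℝ)| / F^[m+1] (x+1) ≤ F^[m+1] x / F^[m+1] (x+1) := by
        gcongr
        exact hxb (m+1)
      have step2 : F^[m+1] x / F^[m+1] (x+1) ≤ Real.exp (-(F^[m] 1)) := by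
        rw [div_le_iff₀ hpx1]
        have h5 : Real.exp (-(F^[m] 1)) * (Real.exp (F^[m] 1) * F^[m+1] x)
            ≤ Real.exp (-(F^[m] 1)) * F^[m+1] (x+1) :=
          mul_le_mul_of_nonneg_left hkey (Real.exp_pos _).le
        have h6 : Real.exp (-(F^[m] 1)) * Real.exp (F^[m] 1) = 1 := by
          rw [← Real.exp_add]; simp
        calc F^[m+1] x = (Real.exp (-(F^[m] 1)) * Real.exp (F^[m] 1)) * F^[m+1] x := by
              rw [h6]; ring
          _ = Real.exp (-(F^[m] 1)) * (Real.exp (F^[m] 1) * F^[m+1] x) := by ring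
          _ ≤ Real.exp (-(F^[m] 1)) * F^[m+1] (x+1) := h5
      have step3 : Real.exp (-(F^[m] 1)) ≤ Real.exp (-(1+(m:ℝ)/2)) :=
        Real.exp_le_exp.2 (by linarith)
      exact le_trans step1 (le_trans step2 step3)
    apply squeeze_zero (fun m => div_nonneg (abs_nonneg _)
      (F_iter_pos (by linarith : (0:ℝ) < x+1) (m+1)).le) hub
    have h7 : Tendsto (fun m : ℕ => 1+(m:ℝ)/2) atTop atTop := by
      apply tendsto_atTop_add_const_left
      exact (tendsto_natCast_atTop_atTop (R := ℝ)).atTop_div_const (by norm_num)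
    have h8 : Tendsto (fun m : ℕ => -(1+(m:ℝ)/2)) atTop atBot := tendsto_neg_atTop_atBot.comp h7
    exact Real.tendsto_exp_atBot.comp h8
  have h9 := ENNReal.tendsto_ofReal key
  rw [ENNReal.ofReal_zero] at h9
  exact h9.limsup_eq

lemma smallbound {t s1 : ℝ} (hs1 : 0 ≤ s1) (hB : s1 ≤ Real.exp (t - 20)) (ht : 20 ≤ t) :
    2*Real.exp (-t) * (2*Real.pi*t + 2*Real.pi*s1 + 12) ≤ 1/2 := by
  set X := Real.exp t with hX
  have hXpos : 0 < X := Real.exp_pos _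
  have hXbig : 216 + 54*t ≤ X := exp_big ht
  have h20 : (1296:ℝ) ≤ Real.exp 20 := by
    have h5 : (6:ℝ) ≤ Real.exp 5 := by
      have := Real.add_one_le_exp (5:ℝ); linarith
    have h5' : (6:ℝ)^4 ≤ (Real.exp 5)^4 := pow_le_pow_left₀ (by norm_num) h5 4
    have he : (Real.exp 5)^4 = Real.exp 20 := by
      rw [← Real.exp_nat_mul]; norm_num
    rw [he] at h5'
    norm_num at h5'
    linarith
  have hs1X : 1296 * s1 ≤ X := by
    have h1 : Real.exp (t-20) * Real.exp 20 = X := by rw [← Real.exp_add]; ring_nf; rw [hX]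
    have h2 : 0 < Real.exp (t-20) := Real.exp_pos _
    nlinarith
  have hπ : Real.pi < 3.15 := by
    have := Real.pi_lt_d2
    linarith
  have hπ0 := Real.pi_pos
  have hp1 : 4*Real.pi*t ≤ 13*t := by nlinarith
  have hp2 : 4*Real.pi*s1 ≤ 13*s1 := by nlinarith
  have heq : 2*Real.exp (-t) * (2*Real.pi*t + 2*Real.pi*s1 + 12)
      = 2*(2*Real.pi*t + 2*Real.pi*s1 + 12) / X := by
    rw [Real.exp_neg, ← hX]
    field_simp
  rw [heq, div_le_iff₀ hXpos]
  nlinarith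

end Aux9

open Real Complex Filter Metric

/-- **Existence of Parameter Ray Tails.**
For every `s ∈ S_0` there is `T_s > t_s` such that for every `t ≥ T_s` the map
`κ ↦ g_s^κ(t)` is defined and holomorphic on the disk `B_{2πt}(0)` and has there exactly
one zero `κ₀`, which is simple; moreover `κ₀ = t + 2πi s_1 + R_s(t)` with
`|R_s(t)| ≤ 2e^{-t}(2πt + 2π|s_2| + 12) < 5`. -/
theorem parameter_ray_tails (s : ℕ → ℤ) (hs : expBounded s) :
    ∃ T : ℝ, tmin s < ENNReal.ofReal T ∧
      ∀ t : ℝ, T ≤ t →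
        (∀ κ ∈ Metric.ball (0 : ℂ) (2 * Real.pi * t), RayDefinedAt κ s t) ∧
        DifferentiableOn ℂ (fun κ => ray κ s t) (Metric.ball (0 : ℂ) (2 * Real.pi * t)) ∧
        ∃ κ₀ ∈ Metric.ball (0 : ℂ) (2 * Real.pi * t),
          ray κ₀ s t = 0 ∧
          (∀ κ ∈ Metric.ball (0 : ℂ) (2 * Real.pi * t), ray κ s t = 0 → κ = κ₀) ∧
          deriv (fun κ => ray κ s t) κ₀ ≠ 0 ∧
          ‖κ₀ - ((t : ℂ) + 2 * (Real.pi : ℂ) * Complex.I * (s 0 : ℂ))‖ ≤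
            2 * Real.exp (-t) * (2 * Real.pi * t + 2 * Real.pi * |(s 1 : ℝ)| + 12) ∧
          2 * Real.exp (-t) * (2 * Real.pi * t + 2 * Real.pi * |(s 1 : ℝ)| + 12) < 5 := by
  obtain ⟨x, hx, hxb⟩ := hs
  have hfin : tstar s ≠ ⊤ := (lt_of_le_of_lt (tstar_le hxb) ENNReal.ofReal_lt_top).ne
  set B := tstarR s with hBdef
  have hB0 : 0 ≤ B := ENNReal.toReal_nonneg
  have hsB : ∀ n, |(s n:ℝ)| ≤ F^[n] B := s_le_tstarR hfin
  have hπ0 := Real.pi_pos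
  have hπ : Real.pi < 3.15 := by linarith [Real.pi_lt_d2]
  refine ⟨4*Real.pi*B + B + x + 100, ?_, ?_⟩
  · refine lt_of_le_of_lt (tmin_le hx hxb) ?_
    rw [ENNReal.ofReal_lt_ofReal_iff (by nlinarith)]
    nlinarith
  intro t htT
  have ht100 : 4*Real.pi*B + B + 100 ≤ t := by linarith
  have htB : 4*Real.pi*B ≤ t := by nlinarith
  have ht20 : 20 ≤ t := by nlinarith
  have htB33 : B + 33 ≤ t := by nlinarith
  have ht9 : 9 ≤ t := by linarith
  set K := 2*Real.pi*t with hKdef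
  have hK0 : 0 ≤ K := by positivity
  -- the hypothesis package
  have hyp : Hyp K (shiftSeq s) (F t) := by
    intro k
    rw [← Function.iterate_succ_apply (f := F)]
    have hGL := growthL (a := B+13) (t := t) (by linarith) (by linarith) k
    have h13 := thirteen hB0 k
    have hsk := hsB (k+1)
    have habs : (0:ℝ) ≤ |(s (k+1):ℝ)| := abs_nonneg _
    have h1 : 4*Real.pi*|(s (k+1):ℝ)| ≤ 13*|(s (k+1):ℝ)| := by nlinarith
    have h2 : 2*K ≤ 13*t := by rw [hKdef]; nlinarith
    have h3 : 13*|(s (k+1):ℝ)| ≤ 13*F^[k+1] B := by linarith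
    simp only [shiftSeq]
    nlinarith
  have hRD : ∀ κ ∈ Metric.ball (0:ℂ) K, RayDefinedAt κ s t := fun κ hκ =>
    ⟨ray κ s t, (master hK0 s t κ (memball_abs hκ) hyp ht9).1⟩
  refine ⟨hRD, rayDiff hK0 s t hyp ht9, ?_⟩
  -- the error function r
  set c : ℂ := 2*(Real.pi:ℂ)*Complex.I*((s 0:ℤ):ℂ) with hcdef
  set a : ℂ := (t:ℂ) + c with hadef
  set r : ℂ → ℂ := fun κ => ray κ s t - ((t:ℂ) - κ + c) with hrdef
  have hrb : ∀ κ, Complex.abs κ ≤ K →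
      Complex.abs (r κ) ≤ 2*Real.exp (-t)*(K + 2*Real.pi*|(s 1:ℝ)| + 4) :=
    fun κ hκ => (master hK0 s t κ hκ hyp ht9).2.2
  have hs1 : |(s 1:ℝ)| ≤ Real.exp (t - 20) := by
    have h1 := hsB 1
    rw [show F^[1] B = F B by rw [Function.iterate_one]] at h1
    have h3 : Real.exp B ≤ Real.exp (t-20) := Real.exp_le_exp.2 (by linarith)
    simp only [F] at h1
    linarith
  have hρ' : 2*Real.exp (-t)*(2*Real.pi*t + 2*Real.pi*|(s 1:ℝ)| + 12) ≤ 1/2 :=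
    smallbound (abs_nonneg _) hs1 ht20
  have hρle : 2*Real.exp (-t)*(K + 2*Real.pi*|(s 1:ℝ)| + 4)
      ≤ 2*Real.exp (-t)*(2*Real.pi*t + 2*Real.pi*|(s 1:ℝ)| + 12) := by
    apply mul_le_mul_of_nonneg_left _ (by positivity)
    rw [hKdef]; linarith
  have hrhalf : ∀ κ, Complex.abs κ ≤ K → Complex.abs (r κ) ≤ 1/2 :=
    fun κ hκ => le_trans (hrb κ hκ) (le_trans hρle hρ')
  -- geometry
  have hs0B : |(s 0:ℝ)| ≤ B := by simpa using hsB 0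
  have hca : Complex.abs a ≤ t + 2*Real.pi*B := by
    calc Complex.abs a ≤ Complex.abs ((t:ℝ):ℂ) + Complex.abs c := Complex.abs.add_le _ _
      _ = t + 2*Real.pi*|(s 0:ℝ)| := by
          rw [hcdef, abs_two_pi_int, Complex.abs_ofReal,
            _root_.abs_of_nonneg (by linarith : (0:ℝ) ≤ t)]
      _ ≤ t + 2*Real.pi*B := by nlinarith
  have hgeom : Complex.abs a + 4 ≤ K := by
    rw [hKdef]
    have hπ3 := Real.pi_gt_three
    have h1 : 6*t ≤ 2*Real.pi*t := by nlinarith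
    linarith
  have hrdiff : DifferentiableOn ℂ r (Metric.ball (0:ℂ) K) := by
    apply DifferentiableOn.sub (rayDiff hK0 s t hyp ht9)
    exact ((differentiableOn_const _).sub differentiableOn_id).add (differentiableOn_const _)
  -- membership helpers
  have hball1 : ∀ w ∈ Metric.closedBall a 1, w ∈ Metric.ball (0:ℂ) K := by
    intro w hw
    rw [mem_ball_zero_iff]
    have h1 : ‖w - a‖ ≤ 1 := by rwa [Metric.mem_closedBall, dist_eq_norm] at hw
    have h2 : ‖w‖ ≤ ‖w - a‖ + ‖a‖ := by
      calc ‖w‖ = ‖(w - a) + a‖ := by ring_nf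
        _ ≤ ‖w - a‖ + ‖a‖ := norm_add_le _ _
    have h3 : ‖a‖ = Complex.abs a := Complex.norm_eq_abs a
    calc ‖w‖ ≤ ‖w - a‖ + ‖a‖ := h2
      _ ≤ 1 + Complex.abs a := by rw [h3]; linarith
      _ < K := by linarith
  -- derivative bound
  have hderiv : ∀ w ∈ Metric.closedBall a 1, Complex.abs (deriv r w) ≤ 1/2 := by
    intro w hw
    have hwK : w ∈ Metric.ball (0:ℂ) K := hball1 w hw
    have hsub : Metric.ball w 3 ⊆ Metric.ball (0:ℂ) K := by
      intro u hu
      rw [mem_ball_zero_iff]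
      rw [Metric.mem_ball, dist_eq_norm] at hu
      have h1 : ‖w - a‖ ≤ 1 := by rwa [Metric.mem_closedBall, dist_eq_norm] at hw
      have h2 : ‖u‖ ≤ ‖u - w‖ + ‖w - a‖ + ‖a‖ := by
        calc ‖u‖ = ‖((u - w) + (w - a)) + a‖ := by ring_nf
          _ ≤ ‖(u - w) + (w - a)‖ + ‖a‖ := norm_add_le _ _
          _ ≤ ‖u - w‖ + ‖w - a‖ + ‖a‖ := by linarith [norm_add_le (u - w) (w - a)]
      have h3 : ‖a‖ = Complex.abs a := Complex.norm_eq_abs a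
      calc ‖u‖ ≤ ‖u - w‖ + ‖w - a‖ + ‖a‖ := h2
        _ < 3 + 1 + Complex.abs a := by rw [h3]; linarith
        _ ≤ K := by linarith
    have hmaps : Set.MapsTo r (Metric.ball w 3) (Metric.ball (r w) (3/2)) := by
      intro u hu
      rw [Metric.mem_ball, Complex.dist_eq]
      have h1 : Complex.abs (r u) ≤ 1/2 := hrhalf u (memball_abs (hsub hu))
      have h2 : Complex.abs (r w) ≤ 1/2 := hrhalf w (memball_abs hwK)
      calc Complex.abs (r u - r w) ≤ Complex.abs (r u) + Complex.abs (r w) := by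
            have h4 := Complex.abs.add_le (r u) (-(r w))
            rw [map_neg_eq_map] at h4
            calc Complex.abs (r u - r w) = Complex.abs (r u + -(r w)) := by rw [sub_eq_add_neg]
              _ ≤ Complex.abs (r u) + Complex.abs (r w) := h4
        _ ≤ 1/2 + 1/2 := by linarith
        _ < 3/2 := by norm_num
    have hS := Complex.norm_deriv_le_div_of_mapsTo_ball (hrdiff.mono hsub) (hmaps.mono_right Metric.ball_subset_closedBall)
      (by norm_num : (0:ℝ) < 3)
    rw [← Complex.norm_eq_abs]
    calc ‖deriv r w‖ ≤ (3/2)/3 := hS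
      _ = 1/2 := by norm_num
  -- Lipschitz estimate on closedBall a 1
  have hlip : ∀ u ∈ Metric.closedBall a 1, ∀ v ∈ Metric.closedBall a 1,
      Complex.abs (r u - r v) ≤ (1/2) * Complex.abs (u - v) := by
    intro u hu v hv
    have hder : ∀ w ∈ Metric.closedBall a 1,
        HasDerivWithinAt r (deriv r w) (Metric.closedBall a 1) w := by
      intro w hw
      exact ((hrdiff.differentiableAt
        (Metric.isOpen_ball.mem_nhds (hball1 w hw))).hasDerivAt).hasDerivWithinAt
    have hbd : ∀ w ∈ Metric.closedBall a 1, ‖deriv r w‖ ≤ 1/2 := by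
      intro w hw
      rw [Complex.norm_eq_abs]
      exact hderiv w hw
    have hMVT := (convex_closedBall a 1).norm_image_sub_le_of_norm_hasDerivWithin_le hder hbd hv hu
    rw [Complex.norm_eq_abs, Complex.norm_eq_abs] at hMVT
    exact hMVT
  -- Banach fixed point on closedBall a (1/2)
  have hhalf1 : Metric.closedBall a (1/2:ℝ) ⊆ Metric.closedBall a 1 :=
    Metric.closedBall_subset_closedBall (by norm_num)
  haveI hne : Nonempty (Metric.closedBall a (1/2:ℝ)) :=
    ⟨⟨a, Metric.mem_closedBall_self (by norm_num)⟩⟩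
  haveI hcs : CompleteSpace (Metric.closedBall a (1/2:ℝ)) :=
    IsClosed.completeSpace_coe (hs := Metric.isClosed_closedBall)
  set f : (Metric.closedBall a (1/2:ℝ)) → (Metric.closedBall a (1/2:ℝ)) := fun p =>
    ⟨a + r p.1, by
      rw [Metric.mem_closedBall, Complex.dist_eq]
      have heq : a + r p.1 - a = r p.1 := by ring
      rw [heq]
      exact hrhalf p.1 (memball_abs (hball1 p.1 (hhalf1 p.2)))⟩ with hfdef
  have hcontr : ContractingWith (1/2 : NNReal) f := by
    constructor
    · simpa using NNReal.half_lt_self one_ne_zero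
    · apply LipschitzWith.of_dist_le_mul
      intro p q
      rw [Subtype.dist_eq, Subtype.dist_eq, Complex.dist_eq, Complex.dist_eq]
      have h1 : (↑(f p) : ℂ) - (↑(f q) : ℂ) = r p.1 - r q.1 := by
        simp only [hfdef]
        ring
      rw [h1]
      have h2 := hlip p.1 (hhalf1 p.2) q.1 (hhalf1 q.2)
      calc Complex.abs (r p.1 - r q.1) ≤ (1/2) * Complex.abs (p.1 - q.1) := h2
        _ = ((1/2 : NNReal) : ℝ) * Complex.abs ((p:ℂ) - (q:ℂ)) := by norm_num
  set P := ContractingWith.fixedPoint f hcontr with hPdef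
  set κ₀ : ℂ := P.1 with hκ₀def
  have hκ₀mem : κ₀ ∈ Metric.closedBall a (1/2:ℝ) := P.2
  have hfix : a + r κ₀ = κ₀ := congrArg Subtype.val hcontr.fixedPoint_isFixedPt
  have hκ₀K : κ₀ ∈ Metric.ball (0:ℂ) K := hball1 κ₀ (hhalf1 hκ₀mem)
  have hrayeq : ∀ κ : ℂ, ray κ s t = (a - κ) + r κ := by
    intro κ
    rw [hrdef, hadef]
    ring
  have hray0 : ray κ₀ s t = 0 := by
    rw [hrayeq κ₀]
    linear_combination hfix
  -- uniqueness
  have huniq : ∀ κ ∈ Metric.ball (0:ℂ) K, ray κ s t = 0 → κ = κ₀ := by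
    intro κ hκ h0
    have hκK : Complex.abs κ ≤ K := memball_abs hκ
    have hfixκ : a + r κ = κ := by
      have h1 := hrayeq κ
      rw [h0] at h1
      linear_combination -h1
    have hκmem : κ ∈ Metric.closedBall a 1 := by
      rw [Metric.mem_closedBall, Complex.dist_eq, Complex.norm_eq_abs]
      have h4 : κ - a = r κ := by linear_combination -hfixκ
      rw [h4]
      linarith [hrhalf κ hκK]
    have h5 : κ - κ₀ = r κ - r κ₀ := by linear_combination hfix - hfixκ
    have h6 := hlip κ hκmem κ₀ (hhalf1 hκ₀mem)
    rw [← h5] at h6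
    have h7 : Complex.abs (κ - κ₀) = 0 := by
      have h8 := Complex.abs.nonneg (κ - κ₀)
      linarith
    have h9 : κ - κ₀ = 0 := by
      exact Complex.abs.eq_zero.1 h7
    linear_combination h9
  -- derivative nonzero
  have hderκ₀ : HasDerivAt r (deriv r κ₀) κ₀ :=
    (hrdiff.differentiableAt (Metric.isOpen_ball.mem_nhds hκ₀K)).hasDerivAt
  have hglim : (fun κ => ray κ s t) = fun κ => (a - κ) + r κ := funext hrayeq
  have hD : HasDerivAt (fun κ => (a - κ) + r κ) (-1 + deriv r κ₀) κ₀ := by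
    have h1 : HasDerivAt (fun κ : ℂ => a - κ) (-1) κ₀ := by
      simpa using (hasDerivAt_id κ₀).const_sub a
    exact h1.add hderκ₀
  have hdval : deriv (fun κ => ray κ s t) κ₀ = -1 + deriv r κ₀ := by
    rw [hglim]
    exact hD.deriv
  have hdnz : deriv (fun κ => ray κ s t) κ₀ ≠ 0 := by
    rw [hdval]
    intro hcontra
    have h8 : deriv r κ₀ = 1 := by linear_combination hcontra
    have h9 := hderiv κ₀ (hhalf1 hκ₀mem)
    rw [h8] at h9
    simp only [map_one] at h9
    norm_num at h9
  -- final bounds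
  have hbound1 : Complex.abs (κ₀ - a) ≤
      2*Real.exp (-t)*(2*Real.pi*t + 2*Real.pi*|(s 1:ℝ)| + 12) := by
    have h10 : κ₀ - a = r κ₀ := by linear_combination -hfix
    rw [h10]
    exact le_trans (hrb κ₀ (memball_abs hκ₀K)) hρle
  have hbound2 : 2*Real.exp (-t)*(2*Real.pi*t + 2*Real.pi*|(s 1:ℝ)| + 12) < 5 :=
    lt_of_le_of_lt hρ' (by norm_num)
  exact ⟨κ₀, hκ₀K, hray0, huniq, hdnz, hbound1, hbound2⟩
end

section
/- Let κ ∈ I be an escaping parameter with Re κ ≥ 4 and |Im κ| ≤ Re κ − 2, let K := |κ|, and let z_k := E_κ^∘(k−1)(0) for k ≥ 1 be the singular orbit. Suppose that for every k ≥ 2 one has |Im z_k| < F^∘(k−1)(Re κ − 2) − K. Then for all k ≥ 1 one has |Re z_k| ≥ F^∘(k−1)(Re κ − 1) − K. -/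
open Filter Topology Set MeasureTheory
open scoped ENNReal Real

noncomputable section BSOaux

private def zz (κ : ℂ) (n : ℕ) : ℂ := (Ek κ)^[n] 0
private def rr (κ : ℂ) (n : ℕ) : ℝ := (zz κ n).re
private def aa (κ : ℂ) (k : ℕ) : ℝ := F^[k] (κ.re - 1)
private def bb (κ : ℂ) (k : ℕ) : ℝ := F^[k] (κ.re - 2)
private def ss (κ : ℂ) (n : ℕ) : ℝ := ∑ i ∈ Finset.range n, (rr κ i + κ.re)

private lemma zz_succ (κ : ℂ) (n : ℕ) : zz κ (n+1) = Complex.exp (zz κ n + κ) := by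
  simp only [zz, Function.iterate_succ_apply', Ek]

private lemma zz_zero (κ : ℂ) : zz κ 0 = 0 := rfl

private lemma rr_zero (κ : ℂ) : rr κ 0 = 0 := by simp [rr, zz]

private lemma abs_zz_succ (κ : ℂ) (n : ℕ) :
    ‖zz κ (n+1)‖ = Real.exp (rr κ n + κ.re) := by
  rw [zz_succ, Complex.norm_exp]
  congr 1

private lemma aa_succ (κ : ℂ) (k : ℕ) : aa κ (k+1) = Real.exp (aa κ k) - 1 := by
  simp only [aa, Function.iterate_succ_apply']; rfl

private lemma bb_succ (κ : ℂ) (k : ℕ) : bb κ (k+1) = Real.exp (bb κ k) - 1 := by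
  simp only [bb, Function.iterate_succ_apply']; rfl

private lemma aa_zero (κ : ℂ) : aa κ 0 = κ.re - 1 := rfl
private lemma bb_zero (κ : ℂ) : bb κ 0 = κ.re - 2 := rfl

private lemma exp3_ge : (20:ℝ) ≤ Real.exp 3 := by
  have h := Real.exp_one_gt_d9
  have h3 : Real.exp 3 = Real.exp 1 * Real.exp 1 * Real.exp 1 := by
    rw [← Real.exp_add, ← Real.exp_add]; norm_num
  nlinarith

private lemma expm1_le : Real.exp (-1:ℝ) ≤ 1/2 := by
  have h : (2:ℝ) ≤ Real.exp 1 := by have := Real.add_one_le_exp (1:ℝ); linarith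
  have h1 : Real.exp (-1:ℝ) * Real.exp 1 = 1 := by rw [← Real.exp_add]; norm_num
  nlinarith [Real.exp_pos (-1:ℝ)]

private lemma expm2_le : Real.exp (-2:ℝ) ≤ 1/2 := by
  have h : (3:ℝ) ≤ Real.exp 2 := by have := Real.add_one_le_exp (2:ℝ); linarith
  have h1 : Real.exp (-2:ℝ) * Real.exp 2 = 1 := by rw [← Real.exp_add]; norm_num
  nlinarith [Real.exp_pos (-2:ℝ)]

private lemma growth1 (t : ℝ) (ht : 4 ≤ t) : 2*t ≤ Real.exp (t-1) := by
  have h1 : Real.exp (t-1) = Real.exp 3 * Real.exp (t-4) := by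
    rw [← Real.exp_add]; ring_nf
  have h2 := Real.add_one_le_exp (t-4)
  nlinarith [exp3_ge, Real.exp_pos (t-4)]

private lemma growth2 (x : ℝ) (hx : 4 ≤ x) : 6*x - 4 ≤ Real.exp x := by
  have h1 : Real.exp x = Real.exp 3 * Real.exp (x-3) := by
    rw [← Real.exp_add]; ring_nf
  have h2 := Real.add_one_le_exp (x-3)
  nlinarith [exp3_ge, Real.exp_pos (x-3)]

private lemma aa_ge (κ : ℂ) (k : ℕ) : κ.re - 1 ≤ aa κ k := by
  induction k with
  | zero => rw [aa_zero]
  | succ k ih =>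
    rw [aa_succ]
    have := Real.add_one_le_exp (aa κ k)
    linarith

private lemma aa_ge3 (κ : ℂ) (hre : 4 ≤ κ.re) (k : ℕ) : 3 ≤ aa κ k := by
  have := aa_ge κ k; linarith

private lemma aa_ge_add (κ : ℂ) (hre : 4 ≤ κ.re) (k : ℕ) : (k:ℝ) + 3 ≤ aa κ k := by
  induction k with
  | zero => rw [aa_zero]; push_cast; linarith
  | succ k ih =>
    rw [aa_succ]
    have h3 : (3:ℝ) ≤ aa κ k := aa_ge3 κ hre k
    have h1 : Real.exp (aa κ k) = Real.exp 3 * Real.exp (aa κ k - 3) := by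
      rw [← Real.exp_add]; ring_nf
    have h2 := Real.add_one_le_exp (aa κ k - 3)
    push_cast
    nlinarith [exp3_ge, Real.exp_pos (aa κ k - 3)]

private lemma bb_ge (κ : ℂ) (k : ℕ) : κ.re - 2 ≤ bb κ k := by
  induction k with
  | zero => rw [bb_zero]
  | succ k ih =>
    rw [bb_succ]
    have := Real.add_one_le_exp (bb κ k)
    linarith

private lemma bb_lt_aa (κ : ℂ) (hre : 4 ≤ κ.re) (k : ℕ) : bb κ k + 1 ≤ aa κ k := by
  induction k with
  | zero => rw [aa_zero, bb_zero]; linarith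
  | succ k ih =>
    rw [aa_succ, bb_succ]
    have h1 : Real.exp (aa κ k) = Real.exp (bb κ k) * Real.exp (aa κ k - bb κ k) := by
      rw [← Real.exp_add]; ring_nf
    have h2 := Real.add_one_le_exp (aa κ k - bb κ k)
    have h3 : (1:ℝ) ≤ Real.exp (bb κ k) := Real.one_le_exp (by have := bb_ge κ k; linarith)
    nlinarith [Real.exp_pos (bb κ k)]

/-- Key step estimate: if the lower bound `P k` holds at step `k`, then the next real part
is large in absolute value. -/
private lemma step_abs (κ : ℂ) (hre : 4 ≤ κ.re)
    (hIm : ∀ k : ℕ, 1 ≤ k →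
      |((Ek κ)^[k] 0).im| < F^[k] (κ.re - 2) - ‖κ‖)
    (k : ℕ) (hP : aa κ k - κ.re + 1 ≤ rr κ k) :
    (1 - Real.exp (-2)) * Real.exp (rr κ k + κ.re) + 1 + ‖κ‖ ≤ |rr κ (k+1)| := by
  have hIm1 : |(zz κ (k+1)).im| < bb κ (k+1) - ‖κ‖ := hIm (k+1) (by omega)
  rw [bb_succ] at hIm1
  have h1 : ‖zz κ (k+1)‖ ≤ |rr κ (k+1)| + |(zz κ (k+1)).im| :=
    Complex.norm_le_abs_re_add_abs_im (zz κ (k+1))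
  rw [abs_zz_succ] at h1
  have h3 : bb κ k ≤ rr κ k + κ.re - 2 := by
    have := bb_lt_aa κ hre k; linarith
  have h4 : Real.exp (bb κ k) ≤ Real.exp (-2) * Real.exp (rr κ k + κ.re) := by
    rw [← Real.exp_add]
    exact Real.exp_le_exp.mpr (by linarith)
  linarith

/-- Collapse is impossible: if `P j` holds for `j ≤ m` but the real part at step `m+1`
is very negative, the orbit is trapped near an attracting cycle, contradicting escape. -/
private lemma collapse (κ : ℂ) (hκ : κ ∈ escapingParams) (hre : 4 ≤ κ.re)
    (hIm : ∀ k : ℕ, 1 ≤ k →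
      |((Ek κ)^[k] 0).im| < F^[k] (κ.re - 2) - ‖κ‖)
    (m : ℕ) (hPle : ∀ j, j ≤ m → aa κ j - κ.re + 1 ≤ rr κ j)
    (hneg : rr κ (m+1) ≤ -((1 - Real.exp (-2)) * Real.exp (rr κ m + κ.re) + 1 + ‖κ‖)) :
    False := by
  have hRK : κ.re ≤ ‖κ‖ := le_trans (le_abs_self _) (Complex.abs_re_le_norm κ)
  have hhalf : (1:ℝ)/2 ≤ 1 - Real.exp (-2) := by have := expm2_le; linarith
  set x : ℝ := rr κ m + κ.re with hxdef
  have hx4 : 4 ≤ x := by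
    have h1 := hPle m le_rfl
    have h2 := aa_ge3 κ hre m
    simp only [hxdef]; linarith
  have hmx : (m:ℝ) + 4 ≤ x := by
    have h1 := hPle m le_rfl
    have h2 := aa_ge_add κ hre m
    simp only [hxdef]; linarith
  -- nonnegativity of the terms
  have hterm : ∀ j, j ≤ m → 0 ≤ rr κ j + κ.re := by
    intro j hj
    have h1 := hPle j hj
    have h2 := aa_ge κ j
    linarith
  -- doubling chain
  have hchain : ∀ j, j + 1 ≤ m → 2 * (rr κ j + κ.re) ≤ rr κ (j+1) + κ.re := by
    intro j hj
    have h1 := step_abs κ hre hIm j (hPle j (by omega))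
    have h2 : 0 ≤ rr κ (j+1) := by
      have := hPle (j+1) hj
      have := aa_ge κ (j+1)
      linarith
    rw [abs_of_nonneg h2] at h1
    have hxj : 4 ≤ rr κ j + κ.re := by
      have := hPle j (by omega)
      have := aa_ge3 κ hre j
      linarith
    have hg := growth1 (rr κ j + κ.re) hxj
    have h5 : Real.exp (rr κ j + κ.re - 1) = Real.exp (-1) * Real.exp (rr κ j + κ.re) := by
      rw [← Real.exp_add]; ring_nf
    have h6 : Real.exp (-1:ℝ) ≤ 1 - Real.exp (-2) := by
      have := expm1_le; linarith
    have h7 : (0:ℝ) < Real.exp (rr κ j + κ.re) := Real.exp_pos _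
    have hK : (0:ℝ) ≤ ‖κ‖ := norm_nonneg κ
    nlinarith
  -- geometric sum bound
  have hsum : ∀ n, n ≤ m → ss κ (n+1) ≤ 2 * (rr κ n + κ.re) := by
    intro n
    induction n with
    | zero =>
      intro _
      have : ss κ 1 = rr κ 0 + κ.re := by
        simp [ss, Finset.sum_range_one]
      rw [this, rr_zero]
      linarith
    | succ n ih =>
      intro hn
      have h1 : ss κ (n+2) = ss κ (n+1) + (rr κ (n+1) + κ.re) := by
        simp [ss, Finset.sum_range_succ]
      have h2 := ih (by omega)
      have h3 := hchain n (by omega)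
      rw [h1]; linarith
  have hsum' : ss κ (m+1) ≤ 2 * x := hsum m le_rfl
  -- the main smallness bound
  have hL : ((m:ℝ)+2) * Real.log 2 + ss κ (m+1) + (rr κ (m+1) + κ.re) ≤ -1 := by
    have hl : Real.log 2 ≤ 1 := by
      have := Real.log_le_sub_one_of_pos (by norm_num : (0:ℝ) < 2); linarith
    have h1 : ((m:ℝ)+2) * Real.log 2 ≤ (m:ℝ)+2 := by
      nlinarith [show (0:ℝ) ≤ (m:ℝ)+2 by positivity]
    have h3 : rr κ (m+1) + κ.re ≤ -(1/2) * Real.exp x - 1 := by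
      nlinarith [Real.exp_pos x]
    have h4 := growth2 x hx4
    linarith
  -- set up the cycle shadowing
  set ε : ℝ := Real.exp (rr κ (m+1) + κ.re) with hεdef
  have hε : 0 < ε := Real.exp_pos _
  have habs_c : ‖zz κ (m+2)‖ = ε := abs_zz_succ κ (m+1)
  have htwo : ∀ n : ℕ, (2:ℝ)^n = Real.exp ((n:ℝ) * Real.log 2) := by
    intro n
    rw [Real.exp_nat_mul, Real.exp_log (by norm_num : (0:ℝ) < 2)]
  have hss_mono : ∀ j, j ≤ m+1 → ss κ j ≤ ss κ (m+1) := by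
    intro j hj
    apply Finset.sum_le_sum_of_subset_of_nonneg (Finset.range_subset_range.mpr hj)
    intro i hi _
    exact hterm i (by have := Finset.mem_range.mp hi; omega)
  -- single step Lipschitz bound
  have hstep2 : ∀ n j : ℕ, ‖zz κ n - zz κ j‖ ≤ 1 →
      ‖zz κ (n+1) - zz κ (j+1)‖ ≤
        2 * Real.exp (rr κ j + κ.re) * ‖zz κ n - zz κ j‖ := by
    intro n j h
    have hid : zz κ (n+1) - zz κ (j+1)
        = Complex.exp (zz κ j + κ) * (Complex.exp (zz κ n - zz κ j) - 1) := by
      rw [zz_succ κ n, zz_succ κ j, mul_sub, mul_one, ← Complex.exp_add,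
        show zz κ j + κ + (zz κ n - zz κ j) = zz κ n + κ by ring]
    rw [hid, norm_mul, Complex.norm_exp,
      show (zz κ j + κ).re = rr κ j + κ.re by simp [rr, Complex.add_re]]
    have h2 := Complex.norm_exp_sub_one_le h
    have h3 : (0:ℝ) < Real.exp (rr κ j + κ.re) := Real.exp_pos _
    nlinarith [norm_nonneg (zz κ n - zz κ j)]
  -- the master bound B ≤ exp(-1)
  have hBexp : ε * ((2:ℝ)^(m+2) * Real.exp (ss κ (m+1)))
      = Real.exp ((rr κ (m+1) + κ.re) + ((((m+2):ℕ):ℝ) * Real.log 2 + ss κ (m+1))) := by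
    rw [hεdef, htwo (m+2), ← Real.exp_add, ← Real.exp_add]
  have hB : ε * ((2:ℝ)^(m+2) * Real.exp (ss κ (m+1))) ≤ Real.exp (-1:ℝ) := by
    rw [hBexp]
    apply Real.exp_le_exp.mpr
    push_cast
    linarith
  have hBj : ∀ j, j ≤ m+1 →
      2*ε * ((2:ℝ)^j * Real.exp (ss κ j)) ≤ Real.exp (-1:ℝ) := by
    intro j hj
    have e1 : Real.exp (ss κ j) ≤ Real.exp (ss κ (m+1)) :=
      Real.exp_le_exp.mpr (hss_mono j hj)
    have e2 : (2:ℝ)^(j+1) ≤ (2:ℝ)^(m+2) := pow_le_pow_right₀ (by norm_num) (by omega)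
    have e0 : 2*ε * ((2:ℝ)^j * Real.exp (ss κ j)) = ε * ((2:ℝ)^(j+1) * Real.exp (ss κ j)) := by
      rw [pow_succ]; ring
    rw [e0]
    calc ε * ((2:ℝ)^(j+1) * Real.exp (ss κ j))
        ≤ ε * ((2:ℝ)^(m+2) * Real.exp (ss κ (m+1))) := by
          apply mul_le_mul_of_nonneg_left _ hε.le
          exact mul_le_mul e2 e1 (Real.exp_pos _).le (by positivity)
      _ ≤ Real.exp (-1:ℝ) := hB
  have hexpm1_le_one : Real.exp (-1:ℝ) ≤ 1 := by
    have := expm1_le; linarith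
  -- inner shadowing estimate
  have hinner : ∀ q : ℕ, ‖zz κ ((m+2)*q)‖ ≤ 2*ε →
      ∀ j, j ≤ m+2 →
        ‖zz κ ((m+2)*q + j) - zz κ j‖ ≤
          ‖zz κ ((m+2)*q)‖ * ((2:ℝ)^j * Real.exp (ss κ j)) := by
    intro q hq j
    induction j with
    | zero =>
      intro _
      simp [zz_zero, ss]
    | succ j ih =>
      intro hj
      have hj' : j ≤ m+1 := by omega
      have ihj := ih (by omega)
      have hA : ‖zz κ ((m+2)*q)‖ ≤ 2*ε := hq
      have hδ1 : ‖zz κ ((m+2)*q + j) - zz κ j‖ ≤ 1 := by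
        have b1 : ‖zz κ ((m+2)*q)‖ * ((2:ℝ)^j * Real.exp (ss κ j))
            ≤ 2*ε * ((2:ℝ)^j * Real.exp (ss κ j)) := by
          apply mul_le_mul_of_nonneg_right hA
          positivity
        have b2 := hBj j hj'
        linarith
      have hstep := hstep2 ((m+2)*q + j) j hδ1
      have hnext : ‖zz κ ((m+2)*q + (j+1)) - zz κ (j+1)‖ ≤
          2 * Real.exp (rr κ j + κ.re) *
            (‖zz κ ((m+2)*q)‖ * ((2:ℝ)^j * Real.exp (ss κ j))) := by
        calc ‖zz κ ((m+2)*q + (j+1)) - zz κ (j+1)‖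
            ≤ 2 * Real.exp (rr κ j + κ.re) * ‖zz κ ((m+2)*q + j) - zz κ j‖ := hstep
          _ ≤ 2 * Real.exp (rr κ j + κ.re) *
              (‖zz κ ((m+2)*q)‖ * ((2:ℝ)^j * Real.exp (ss κ j))) := by
            apply mul_le_mul_of_nonneg_left ihj
            positivity
      have hssj : ss κ (j+1) = ss κ j + (rr κ j + κ.re) := by
        simp [ss, Finset.sum_range_succ]
      calc ‖zz κ ((m+2)*q + (j+1)) - zz κ (j+1)‖
          ≤ 2 * Real.exp (rr κ j + κ.re) *
              (‖zz κ ((m+2)*q)‖ * ((2:ℝ)^j * Real.exp (ss κ j))) := hnext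
        _ = ‖zz κ ((m+2)*q)‖ * ((2:ℝ)^(j+1) * Real.exp (ss κ (j+1))) := by
            simp only [hssj, Real.exp_add, pow_succ]
            ring
  -- outer induction: the orbit returns near 0 forever
  have houter : ∀ q : ℕ, 1 ≤ q → ‖zz κ ((m+2)*q)‖ ≤ 2*ε := by
    intro q hq
    induction q with
    | zero => omega
    | succ q ih =>
      rcases Nat.eq_or_lt_of_le hq with h1 | h1
      · rw [← h1]
        simp only [mul_one]
        rw [habs_c]
        linarith
      · have hq1 : 1 ≤ q := by omega
        have hqs := ih hq1
        have hfin := hinner q hqs (m+2) le_rfl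
        have hssm2 : Real.exp (ss κ (m+2)) = Real.exp (ss κ (m+1)) * ε := by
          rw [hεdef, ← Real.exp_add]
          congr 1
          simp [ss, Finset.sum_range_succ]
        have e6 : ‖zz κ ((m+2)*q + (m+2)) - zz κ (m+2)‖ ≤ ε := by
          have b0 : ‖zz κ ((m+2)*q)‖ * ((2:ℝ)^(m+2) * Real.exp (ss κ (m+2)))
              ≤ 2*ε * ((2:ℝ)^(m+2) * (Real.exp (ss κ (m+1)) * ε)) := by
            rw [← hssm2]
            apply mul_le_mul_of_nonneg_right hqs (by positivity)
          have b1 : 2*ε * ((2:ℝ)^(m+2) * (Real.exp (ss κ (m+1)) * ε))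
              = 2*ε * (ε * ((2:ℝ)^(m+2) * Real.exp (ss κ (m+1)))) := by ring
          have b2 : 2*ε * (ε * ((2:ℝ)^(m+2) * Real.exp (ss κ (m+1))))
              ≤ 2*ε * Real.exp (-1:ℝ) :=
            mul_le_mul_of_nonneg_left hB (by positivity)
          have b3 : 2*ε * Real.exp (-1:ℝ) ≤ ε := by nlinarith [expm1_le]
          linarith [hfin]
      -- conclude
        have hmul : (m+2)*(q+1) = (m+2)*q + (m+2) := by ring
        rw [hmul]
        calc ‖zz κ ((m+2)*q + (m+2))‖
            ≤ ‖zz κ (m+2)‖ + ‖zz κ ((m+2)*q + (m+2)) - zz κ (m+2)‖ := by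
              have := norm_add_le (zz κ (m+2)) (zz κ ((m+2)*q + (m+2)) - zz κ (m+2))
              simpa using this
          _ ≤ ε + ε := by rw [habs_c]; linarith
          _ = 2*ε := by ring
  -- contradiction with escape
  have hesc : Filter.Tendsto (fun n => ‖zz κ n‖) Filter.atTop Filter.atTop := hκ
  obtain ⟨N, hN⟩ := Filter.eventually_atTop.mp (Filter.tendsto_atTop.mp hesc (2*ε + 1))
  have h1 := houter (N+1) (by omega)
  have h2 : N ≤ (m+2)*(N+1) := by
    calc N ≤ N+1 := Nat.le_succ N
      _ ≤ (m+2)*(N+1) := Nat.le_mul_of_pos_left (N+1) (by omega)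
  have h3 := hN ((m+2)*(N+1)) h2
  linarith

/-- The inductive lower bound `P k : aa k - Re κ + 1 ≤ rr k`. -/
private lemma main_P (κ : ℂ) (hκ : κ ∈ escapingParams) (hre : 4 ≤ κ.re)
    (hIm : ∀ k : ℕ, 1 ≤ k →
      |((Ek κ)^[k] 0).im| < F^[k] (κ.re - 2) - ‖κ‖) :
    ∀ k : ℕ, aa κ k - κ.re + 1 ≤ rr κ k := by
  have hRK : κ.re ≤ ‖κ‖ := le_trans (le_abs_self _) (Complex.abs_re_le_norm κ)
  suffices h : ∀ k, ∀ j, j ≤ k → aa κ j - κ.re + 1 ≤ rr κ j by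
    intro k; exact h k k le_rfl
  intro k
  induction k with
  | zero =>
    intro j hj
    have hj0 : j = 0 := by omega
    subst hj0
    rw [aa_zero, rr_zero]
    linarith
  | succ k ih =>
    intro j hj
    rcases Nat.lt_or_ge j (k+1) with h | h
    · exact ih j (by omega)
    · have hj1 : j = k+1 := by omega
      subst hj1
      have hPk := ih k le_rfl
      have habs := step_abs κ hre hIm k hPk
      rcases le_or_gt 0 (rr κ (k+1)) with hsign | hsign
      · -- positive branch: establish P (k+1)
        rw [abs_of_nonneg hsign] at habs
        rw [aa_succ]
        have hx : aa κ k + 1 ≤ rr κ k + κ.re := by linarith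
        have h4 : Real.exp (aa κ k) ≤ Real.exp (-1) * Real.exp (rr κ k + κ.re) := by
          rw [← Real.exp_add]
          exact Real.exp_le_exp.mpr (by linarith)
        have h6 : Real.exp (-1:ℝ) ≤ 1 - Real.exp (-2) := by
          have := expm1_le; have := expm2_le; linarith
        have h7 : (0:ℝ) < Real.exp (rr κ k + κ.re) := Real.exp_pos _
        have hK : (0:ℝ) ≤ ‖κ‖ := norm_nonneg κ
        nlinarith
      · -- negative branch: collapse, contradiction
        exfalso
        apply collapse κ hκ hre hIm k (fun j hj => ih j hj)
        rw [abs_of_neg hsign] at habs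
        linarith

end BSOaux


/-- **The Behavior of the Singular Orbit.**
Let `κ ∈ I` with `Re κ ≥ 4` and `|Im κ| ≤ Re κ - 2`, let `K = |κ|` and let
`z_k = E_κ^{∘(k-1)}(0)` be the singular orbit. If `|Im z_k| < F^{∘(k-1)}(Re κ - 2) - K`
for all `k ≥ 2`, then `|Re z_k| ≥ F^{∘(k-1)}(Re κ - 1) - K` for all `k ≥ 1`.
(Here the index `k ≥ 1` of the paper corresponds to the iterate count `k - 1 ≥ 0`.) -/
theorem behavior_singular_orbit (κ : ℂ) (hκ : κ ∈ escapingParams)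
    (hre : 4 ≤ κ.re) (him : |κ.im| ≤ κ.re - 2)
    (hIm : ∀ k : ℕ, 1 ≤ k →
      |((Ek κ)^[k] 0).im| < F^[k] (κ.re - 2) - ‖κ‖) :
    ∀ k : ℕ, F^[k] (κ.re - 1) - ‖κ‖ ≤ |((Ek κ)^[k] 0).re| := by
  intro k
  have hP := main_P κ hκ hre hIm k
  have hRK : κ.re ≤ ‖κ‖ := le_trans (le_abs_self _) (Complex.abs_re_le_norm κ)
  have h1 : aa κ k - κ.re + 1 ≤ |rr κ k| := le_trans hP (le_abs_self _)
  show aa κ k - ‖κ‖ ≤ |rr κ k|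
  linarith
end

section
/- If x ≥ 0 and t ≥ 5 are real numbers with t ≥ 2x + 5, then ∑_{k=1}^∞ 1/(F^∘k(t) + 1) < 3e^{−t} and ∑_{k=1}^∞ F^∘k(x)/(F^∘k(t) + 1) < (e^x + 1)e^{−t}. Moreover, for every n ≥ 1 and every t ≥ 0, (d/dt) F^∘n(t) = ∏_{k=1}^n (F^∘k(t) + 1), and there exists T > 0 such that for all t ≥ T and all n ≥ 1, (F^∘n)'(t)/(F^∘n(t) + 1)² ≤ 1/(F^∘n(t − 1) + 1). -/
open Filter Topology Set MeasureTheory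
open scoped ENNReal Real

namespace PropF

open Real

lemma F_add_one (v : ℝ) : F v + 1 = exp v := by simp [F]

lemma iter_add_one (k : ℕ) (v : ℝ) : F^[k + 1] v + 1 = exp (F^[k] v) := by
  rw [Function.iterate_succ_apply', F_add_one]

lemma le_F (v : ℝ) : v ≤ F v := by
  have := Real.add_one_le_exp v
  simp only [F]; linarith

lemma le_iter (k : ℕ) (v : ℝ) : v ≤ F^[k] v := by
  induction k with
  | zero => simp
  | succ n ih =>
    rw [Function.iterate_succ_apply']
    exact ih.trans (le_F _)

lemma exp_ge_add_two {v : ℝ} (hv : 2 ≤ v) : v + 2 ≤ exp v := by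
  have h := Real.add_one_le_exp (v / 2)
  have h2 : exp v = exp (v / 2) * exp (v / 2) := by
    rw [← Real.exp_add]; ring_nf
  nlinarith [Real.exp_pos (v / 2)]

lemma F_ge_add_one {v : ℝ} (hv : 2 ≤ v) : v + 1 ≤ F v := by
  have := exp_ge_add_two hv
  simp only [F]; linarith

lemma iter_ge_add {v : ℝ} (hv : 2 ≤ v) (k : ℕ) : v + k ≤ F^[k] v := by
  induction k with
  | zero => simp
  | succ n ih =>
    rw [Function.iterate_succ_apply']
    have h2 : 2 ≤ F^[n] v := hv.trans (le_iter n v)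
    have := F_ge_add_one h2
    push_cast
    push_cast at ih
    linarith

lemma inv_lemma {x t : ℝ} (hx : 0 ≤ x) (ht : 5 ≤ t) (hxt : 2 * x + 5 ≤ t) (k : ℕ) :
    F^[k + 1] x + (t + (k + 1 : ℕ)) ≤ F^[k + 1] t := by
  induction k with
  | zero =>
    simp only [zero_add, Function.iterate_one, Nat.cast_one, F]
    have h1 : exp t = exp x * exp (t - x) := by rw [← exp_add]; ring_nf
    have h2 : x + 1 ≤ exp x := Real.add_one_le_exp x
    have h3 : (t - x) / 2 + 1 ≤ exp ((t - x) / 2) := Real.add_one_le_exp _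
    have h4 : exp (t - x) = exp ((t - x) / 2) * exp ((t - x) / 2) := by
      rw [← exp_add]; ring_nf
    have hu : 5 ≤ t - x := by linarith
    have hE : 1 + (t - x) + (t - x) ^ 2 / 4 ≤ exp (t - x) := by nlinarith
    have hE2 : t + 2 ≤ exp (t - x) := by nlinarith [sq_nonneg (t - x - 2)]
    nlinarith [Real.exp_pos ((t - x) / 2), Real.exp_pos x,
      mul_nonneg (by linarith : (0:ℝ) ≤ exp x - 1) (by nlinarith : (0:ℝ) ≤ exp (t - x) - 1)]
  | succ n ih =>
    rw [Function.iterate_succ_apply' F (n + 1) x, Function.iterate_succ_apply' F (n + 1) t]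
    set a := F^[n + 1] x with ha
    set b := F^[n + 1] t with hb
    have ha0 : 0 ≤ a := le_trans hx (le_iter _ _)
    push_cast at ih ⊢
    have h1 : exp (a + (t + (n + 1))) ≤ exp b := exp_le_exp.2 (by linarith)
    have h2 : exp (a + (t + (n + 1))) = exp a * exp (t + (n + 1)) := by rw [← exp_add]
    have h3 : (t + (n + 1)) + 2 ≤ exp (t + (n + 1)) :=
      exp_ge_add_two (by have : (0:ℝ) ≤ n := Nat.cast_nonneg n; linarith)
    have h4 : 1 ≤ exp a := by
      rw [show (1:ℝ) = exp 0 by simp]; exact exp_le_exp.2 ha0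
    simp only [F]
    nlinarith [Real.exp_pos a, Real.exp_pos (t + (n + 1 : ℝ))]

lemma hasDeriv (n : ℕ) (u : ℝ) :
    HasDerivAt (F^[n]) (∏ k ∈ Finset.Icc 1 n, (F^[k] u + 1)) u := by
  induction n with
  | zero => simpa using hasDerivAt_id u
  | succ m ih =>
    have hF : HasDerivAt F (exp (F^[m] u)) (F^[m] u) := by
      exact (Real.hasDerivAt_exp (F^[m] u)).sub_const 1
    have hc := hF.comp u ih
    rw [Function.iterate_succ' F m]
    refine hc.congr_deriv ?_
    rw [Finset.prod_Icc_succ_top (Nat.succ_le_succ (Nat.zero_le m)), iter_add_one]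
    ring

lemma prodExp (n : ℕ) (u : ℝ) :
    ∏ k ∈ Finset.Icc 1 n, (F^[k] u + 1) = exp (∑ k ∈ Finset.range n, F^[k] u) := by
  induction n with
  | zero => simp
  | succ m ih =>
    rw [Finset.prod_Icc_succ_top (Nat.succ_le_succ (Nat.zero_le m)), ih,
      Finset.sum_range_succ, Real.exp_add, iter_add_one]

lemma qlem {u : ℝ} (hu : 7 ≤ u) (m : ℕ) :
    2 * ((∑ k ∈ Finset.range (m + 1), F^[k] u) + F^[m + 1] (u - 1) + 1) ≤ F^[m + 1] u := by
  induction m with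
  | zero =>
    simp only [zero_add, Finset.sum_range_one, Function.iterate_one, Function.iterate_zero, id_eq, F]
    set w := (u - 1) / 3 with hw
    have hw2 : 2 ≤ w := by rw [hw]; linarith
    have h1 : w + 1 ≤ exp w := Real.add_one_le_exp w
    have h2 : exp (u - 1) = exp w * exp w * exp w := by
      rw [← exp_add, ← exp_add]; congr 1; rw [hw]; ring
    have h3 : exp u = exp 1 * exp (u - 1) := by rw [← exp_add]; ring_nf
    have h4 : (2.7 : ℝ) < exp 1 := lt_trans (by norm_num) Real.exp_one_gt_d9
    have h5 : (w + 1) ^ 3 ≤ exp (u - 1) := by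
      rw [h2]
      have hwp : (0:ℝ) < w + 1 := by linarith
      nlinarith [Real.exp_pos w, mul_le_mul h1 h1 (by linarith) (Real.exp_pos w).le]
    have h6 : u = 3 * w + 1 := by rw [hw]; ring
    nlinarith [Real.exp_pos (u - 1), sq_nonneg (w - 2)]
  | succ m ih =>
    rw [Function.iterate_succ_apply' F (m + 1) (u - 1), Function.iterate_succ_apply' F (m + 1) u,
      Finset.sum_range_succ]
    set S := ∑ k ∈ Finset.range (m + 1), F^[k] u with hS
    set a := F^[m + 1] u with ha
    set b := F^[m + 1] (u - 1) with hb
    have ha7 : 7 ≤ a := hu.trans (le_iter _ _)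
    have hb6 : 6 ≤ b := (by linarith : 6 ≤ u - 1).trans (le_iter _ _)
    have hS0 : 0 ≤ S := Finset.sum_nonneg fun k _ => le_trans (by linarith) (le_iter k u)
    have hsplit : exp b * exp S * exp (a / 2) ≤ exp a := by
      rw [← exp_add, ← exp_add]
      exact exp_le_exp.2 (by linarith)
    have hm : 1 + S ≤ exp S := by linarith [Real.add_one_le_exp S]
    have heb : 7 ≤ exp b := by linarith [Real.add_one_le_exp b]
    have hea : 1 + a / 2 + a ^ 2 / 16 ≤ exp (a / 2) := by
      have h1 : a / 4 + 1 ≤ exp (a / 4) := Real.add_one_le_exp _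
      have h2 : exp (a / 2) = exp (a / 4) * exp (a / 4) := by rw [← exp_add]; ring_nf
      nlinarith [Real.exp_pos (a / 4)]
    have h1 : exp b * ((1 + S) * (1 + a / 2 + a ^ 2 / 16)) ≤ exp b * (exp S * exp (a / 2)) := by
      apply mul_le_mul_of_nonneg_left _ (Real.exp_pos b).le
      exact mul_le_mul hm hea (by nlinarith) (Real.exp_pos S).le
    simp only [F]
    nlinarith [Real.exp_pos a, Real.exp_pos b, mul_nonneg (mul_nonneg (by linarith : (0:ℝ) ≤ exp b) hS0) (by nlinarith : (0:ℝ) ≤ a ^ 2 / 16),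
      mul_le_mul_of_nonneg_right heb (by linarith : (0:ℝ) ≤ a),
      mul_le_mul_of_nonneg_right heb hS0,
      mul_le_mul_of_nonneg_right heb (by nlinarith : (0:ℝ) ≤ a ^ 2)]

lemma key {u : ℝ} (hu : 7 ≤ u) (m : ℕ) :
    (∑ k ∈ Finset.range m, F^[k] u) + F^[m] (u - 1) ≤ F^[m] u := by
  cases m with
  | zero =>
    simp only [Finset.range_zero, Finset.sum_empty, Function.iterate_zero, id_eq, zero_add]
    linarith
  | succ j =>
    have h := qlem hu j
    have hS0 : 0 ≤ ∑ k ∈ Finset.range (j + 1), F^[k] u :=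
      Finset.sum_nonneg fun k _ => le_trans (by linarith) (le_iter k u)
    have hb0 : 0 ≤ F^[j + 1] (u - 1) := le_trans (by linarith) (le_iter _ _)
    linarith

end PropF

/-- **Some Properties of `F`.**
If `x ≥ 0`, `t ≥ 5` and `t ≥ 2x + 5`, then `∑_{k≥1} 1/(F^∘k(t)+1) < 3e^{-t}` and
`∑_{k≥1} F^∘k(x)/(F^∘k(t)+1) < (e^x+1)e^{-t}`. Moreover
`(F^∘n)'(u) = ∏_{k=1}^n (F^∘k(u)+1)`, and there is `T > 0` such that for all `u ≥ T` and
`n ≥ 1`, `(F^∘n)'(u)/(F^∘n(u)+1)² ≤ 1/(F^∘n(u-1)+1)`. -/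
theorem properties_of_F (x t : ℝ) (hx : 0 ≤ x) (ht : 5 ≤ t) (hxt : 2 * x + 5 ≤ t) :
    (Summable (fun k : ℕ => 1 / (F^[k + 1] t + 1)) ∧
      ∑' k : ℕ, 1 / (F^[k + 1] t + 1) < 3 * Real.exp (-t)) ∧
    (Summable (fun k : ℕ => F^[k + 1] x / (F^[k + 1] t + 1)) ∧
      ∑' k : ℕ, F^[k + 1] x / (F^[k + 1] t + 1) < (Real.exp x + 1) * Real.exp (-t)) ∧
    (∀ n : ℕ, 1 ≤ n → ∀ u : ℝ, 0 ≤ u →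
      HasDerivAt (F^[n]) (∏ k ∈ Finset.Icc 1 n, (F^[k] u + 1)) u) ∧
    (∃ T : ℝ, 0 < T ∧ ∀ u : ℝ, T ≤ u → ∀ n : ℕ, 1 ≤ n →
      deriv (F^[n]) u / (F^[n] u + 1) ^ 2 ≤ 1 / (F^[n] (u - 1) + 1)) := by
  have hr0 : (0:ℝ) ≤ Real.exp (-1) := (Real.exp_pos _).le
  have hr1 : Real.exp (-1) < 1 := by
    rw [show (1:ℝ) = Real.exp 0 by simp]
    exact Real.exp_lt_exp.2 (by norm_num)
  have hrB : Real.exp (-1) < 0.38 := by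
    have h1 : Real.exp (-1) * Real.exp 1 = 1 := by rw [← Real.exp_add]; norm_num
    nlinarith [Real.exp_pos (-1), Real.exp_one_gt_d9]
  have hinv3 : (1 - Real.exp (-1))⁻¹ < 1.7 := by
    have h1r : (0:ℝ) < 1 - Real.exp (-1) := by linarith
    have h3 : (1 - Real.exp (-1))⁻¹ * (1 - Real.exp (-1)) = 1 := inv_mul_cancel₀ (ne_of_gt h1r)
    nlinarith [inv_pos.2 h1r]
  have hgeo : Summable (fun k : ℕ => Real.exp (-1) ^ k) := summable_geometric_of_lt_one hr0 hr1
  have hgeosum : ∑' k : ℕ, Real.exp (-1) ^ k = (1 - Real.exp (-1))⁻¹ :=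
    tsum_geometric_of_lt_one hr0 hr1
  -- sum 1
  have hfb : ∀ k : ℕ, 1 / (F^[k + 1] t + 1) ≤ Real.exp (-t) * Real.exp (-1) ^ k := by
    intro k
    rw [PropF.iter_add_one, one_div, ← Real.exp_neg]
    have h1 : t + k ≤ F^[k] t := PropF.iter_ge_add (by linarith) k
    have h2 : Real.exp (-t) * Real.exp (-1) ^ k = Real.exp (-(t + k)) := by
      rw [← Real.exp_nat_mul, ← Real.exp_add]; congr 1; push_cast; ring
    rw [h2]
    exact Real.exp_le_exp.2 (by linarith)
  have hfpos : ∀ k : ℕ, 0 ≤ 1 / (F^[k + 1] t + 1) := by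
    intro k; rw [PropF.iter_add_one]; positivity
  have hbsum : Summable (fun k : ℕ => Real.exp (-t) * Real.exp (-1) ^ k) := hgeo.mul_left _
  have hs1 : Summable (fun k : ℕ => 1 / (F^[k + 1] t + 1)) :=
    Summable.of_nonneg_of_le hfpos hfb hbsum
  have ht1 : ∑' k : ℕ, 1 / (F^[k + 1] t + 1) < 3 * Real.exp (-t) := by
    calc ∑' k : ℕ, 1 / (F^[k + 1] t + 1) ≤ ∑' k : ℕ, Real.exp (-t) * Real.exp (-1) ^ k :=
          Summable.tsum_le_tsum hfb hs1 hbsum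
      _ = Real.exp (-t) * (1 - Real.exp (-1))⁻¹ := by rw [tsum_mul_left, hgeosum]
      _ < 3 * Real.exp (-t) := by nlinarith [Real.exp_pos (-t)]
  -- sum 2
  have hdiff : ∀ k : ℕ, F^[k] x + (t + k) ≤ F^[k] t + x := by
    intro k
    cases k with
    | zero => simp only [Function.iterate_zero, id_eq, Nat.cast_zero, add_zero]; linarith
    | succ j =>
      have h := PropF.inv_lemma hx ht hxt j
      push_cast at h ⊢
      linarith
  have hgb : ∀ k : ℕ, F^[k + 1] x / (F^[k + 1] t + 1) ≤ Real.exp (F^[k] x - F^[k] t) := by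
    intro k
    rw [PropF.iter_add_one, Real.exp_sub]
    have hnum : F^[k + 1] x ≤ Real.exp (F^[k] x) := by
      rw [← PropF.iter_add_one]; linarith
    gcongr
  have hgb2 : ∀ k : ℕ, F^[k + 1] x / (F^[k + 1] t + 1)
      ≤ Real.exp x * (Real.exp (-t) * Real.exp (-1) ^ k) := by
    intro k
    refine (hgb k).trans ?_
    have h2 : Real.exp x * (Real.exp (-t) * Real.exp (-1) ^ k) = Real.exp (x - t - k) := by
      rw [← Real.exp_nat_mul, ← Real.exp_add, ← Real.exp_add]; congr 1; push_cast; ring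
    rw [h2]
    exact Real.exp_le_exp.2 (by have := hdiff k; linarith)
  have hgpos : ∀ k : ℕ, 0 ≤ F^[k + 1] x / (F^[k + 1] t + 1) := by
    intro k
    have h1 : 0 ≤ F^[k + 1] x := le_trans hx (PropF.le_iter _ _)
    have h2 : 0 < F^[k + 1] t + 1 := by rw [PropF.iter_add_one]; positivity
    positivity
  have hs2 : Summable (fun k : ℕ => F^[k + 1] x / (F^[k + 1] t + 1)) :=
    Summable.of_nonneg_of_le hgpos hgb2 ((hgeo.mul_left _).mul_left _)
  have htail : ∀ k : ℕ, F^[k + 1 + 1] x / (F^[k + 1 + 1] t + 1)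
      ≤ (Real.exp (-t) * Real.exp (-1)) * Real.exp (-1) ^ k := by
    intro k
    refine (hgb (k + 1)).trans ?_
    have h2 : (Real.exp (-t) * Real.exp (-1)) * Real.exp (-1) ^ k = Real.exp (-(t + (k + 1))) := by
      rw [← Real.exp_nat_mul, ← Real.exp_add, ← Real.exp_add]; congr 1; push_cast; ring
    have h3 := PropF.inv_lemma hx ht hxt k
    rw [h2]
    apply Real.exp_le_exp.2
    push_cast at h3 ⊢
    linarith
  have hs2' : Summable (fun k : ℕ => F^[k + 1 + 1] x / (F^[k + 1 + 1] t + 1)) :=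
    Summable.of_nonneg_of_le (fun k => hgpos (k + 1)) htail (hgeo.mul_left _)
  have ht2 : ∑' k : ℕ, F^[k + 1] x / (F^[k + 1] t + 1) < (Real.exp x + 1) * Real.exp (-t) := by
    rw [Summable.tsum_eq_zero_add hs2]
    have hg0 : F^[0 + 1] x / (F^[0 + 1] t + 1) = (Real.exp x - 1) * Real.exp (-t) := by
      simp only [zero_add, Function.iterate_one, PropF.F_add_one]
      simp [F, Real.exp_neg, div_eq_mul_inv]
    have htsum : ∑' k : ℕ, F^[k + 1 + 1] x / (F^[k + 1 + 1] t + 1)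
        ≤ (Real.exp (-t) * Real.exp (-1)) * (1 - Real.exp (-1))⁻¹ := by
      calc ∑' k : ℕ, F^[k + 1 + 1] x / (F^[k + 1 + 1] t + 1)
          ≤ ∑' k : ℕ, (Real.exp (-t) * Real.exp (-1)) * Real.exp (-1) ^ k :=
            Summable.tsum_le_tsum htail hs2' (hgeo.mul_left _)
        _ = (Real.exp (-t) * Real.exp (-1)) * (1 - Real.exp (-1))⁻¹ := by
            rw [tsum_mul_left, hgeosum]
    rw [hg0]
    have h1 : Real.exp (-1) * (1 - Real.exp (-1))⁻¹ < 0.38 * 1.7 := by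
      have hp : (0:ℝ) < (1 - Real.exp (-1))⁻¹ := inv_pos.2 (by linarith)
      nlinarith
    nlinarith [Real.exp_pos (-t), Real.exp_pos x]
  refine ⟨⟨hs1, ht1⟩, ⟨hs2, ht2⟩, fun n _ u _ => PropF.hasDeriv n u, 7, by norm_num, ?_⟩
  intro u hu n hn
  obtain ⟨m, rfl⟩ : ∃ m, n = m + 1 := ⟨n - 1, (Nat.succ_pred_eq_of_pos hn).symm⟩
  have hd : deriv (F^[m + 1]) u
      = Real.exp ((∑ k ∈ Finset.range m, F^[k] u) + F^[m] u) := by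
    rw [(PropF.hasDeriv (m + 1) u).deriv, PropF.prodExp, Finset.sum_range_succ]
  rw [hd, PropF.iter_add_one, PropF.iter_add_one]
  rw [div_le_div_iff₀ (by positivity) (by positivity), one_mul, sq, ← Real.exp_add,
    ← Real.exp_add]
  apply Real.exp_le_exp.2
  have hk := PropF.key (by linarith : (7:ℝ) ≤ u) m
  linarith
end
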